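/- arXiv:1708.07236 — 6 statements merged into one kernel-verified Lean document; each statement's English description precedes it below -/
import Mathlib

section
/- Let A ∈ ASM(n) and let u ∈ S_n be a Grassmannian permutation with its unique descent at position d. If r_A(d,j) ≤ r_u(d,j) for all j = 1, ..., n, then u ≤ A in the order on ASM(n), i.e. r_A(i,j) ≤ r_u(i,j) for all 1 ≤ i,j ≤ n. -/
/-- The entry of an `n × n` integer matrix in 1-based coordinates;
`0` outside the grid `[1,n] × [1,n]`. -/
def entry1 {n : ℕ} (A : Matrix (Fin n) (Fin n) ℤ) (i j : ℕ) : ℤ :=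
  if h : 1 ≤ i ∧ i ≤ n ∧ 1 ≤ j ∧ j ≤ n then
    A ⟨i - 1, by omega⟩ ⟨j - 1, by omega⟩ else 0

/-- The corner sum `r_A(i,j) = ∑_{k ≤ i} ∑_{l ≤ j} a_{k l}` (1-based). -/
def cornerSum {n : ℕ} (A : Matrix (Fin n) (Fin n) ℤ) (i j : ℕ) : ℤ :=
  ∑ k ∈ Finset.Icc 1 i, ∑ l ∈ Finset.Icc 1 j, entry1 A k l

/-- Partial row sum `∑_{l=1}^{j} a_{i l}`. -/
def rowPartial {n : ℕ} (A : Matrix (Fin n) (Fin n) ℤ) (i j : ℕ) : ℤ :=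
  ∑ l ∈ Finset.Icc 1 j, entry1 A i l

/-- Partial column sum `∑_{k=1}^{i} a_{k j}`. -/
def colPartial {n : ℕ} (A : Matrix (Fin n) (Fin n) ℤ) (i j : ℕ) : ℤ :=
  ∑ k ∈ Finset.Icc 1 i, entry1 A k j

/-- `A` is an alternating sign matrix: every partial row and column sum is `0`
or `1`, and every full row and column sums to `1`. -/
def IsASM {n : ℕ} (A : Matrix (Fin n) (Fin n) ℤ) : Prop :=
  (∀ i j : ℕ, rowPartial A i j = 0 ∨ rowPartial A i j = 1) ∧
  (∀ i j : ℕ, colPartial A i j = 0 ∨ colPartial A i j = 1) ∧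
  (∀ i : ℕ, 1 ≤ i → i ≤ n → rowPartial A i n = 1) ∧
  (∀ j : ℕ, 1 ≤ j → j ≤ n → colPartial A n j = 1)

/-- `A` is a partial alternating sign matrix: every partial row and column sum
is `0` or `1`. -/
def IsPartialASM {n : ℕ} (A : Matrix (Fin n) (Fin n) ℤ) : Prop :=
  (∀ i j : ℕ, rowPartial A i j = 0 ∨ rowPartial A i j = 1) ∧
  (∀ i j : ℕ, colPartial A i j = 0 ∨ colPartial A i j = 1)

/-- `(i,j)` (1-based) is in the Rothe diagram `D(A)`:
`∑_{k > i, l > j} a_{i l} a_{k j} = 1`. -/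
def InDiagram {n : ℕ} (A : Matrix (Fin n) (Fin n) ℤ) (i j : ℕ) : Prop :=
  (∑ k ∈ Finset.Icc 1 n, ∑ l ∈ Finset.Icc 1 n,
    (if i < k ∧ j < l then entry1 A i l * entry1 A k j else 0)) = 1

/-- `(i,j)` is in the essential set `Ess(A)`. -/
def InEss {n : ℕ} (A : Matrix (Fin n) (Fin n) ℤ) (i j : ℕ) : Prop :=
  InDiagram A i j ∧ ¬ InDiagram A (i + 1) j ∧ ¬ InDiagram A i (j + 1)

/-- The permutation matrix of `w` (a `1` in positions `(a, w a)`). -/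
def permMatrix {n : ℕ} (w : Equiv.Perm (Fin n)) : Matrix (Fin n) (Fin n) ℤ :=
  Matrix.of fun a b => if w a = b then 1 else 0

/-- The value `w(a)` of the permutation `w` in 1-based coordinates, extended by
the identity outside `[1,n]`. -/
def pval {n : ℕ} (w : Equiv.Perm (Fin n)) (a : ℕ) : ℕ :=
  if h : 1 ≤ a ∧ a ≤ n then ((w ⟨a - 1, by omega⟩ : Fin n) : ℕ) + 1 else a

/-- The value function (1-based) of the biGrassmannian permutation `[i,j,r]_b`. -/
def biGrFun (i j r a : ℕ) : ℕ :=
  if a ≤ r then a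
  else if a ≤ i then a + (j - r)
  else if a ≤ i + j - r then a - (i - r)
  else a

/-- The permutation matrix of the biGrassmannian permutation `[i,j,r]_b ∈ S_n`. -/
def biGrMatrix (n i j r : ℕ) : Matrix (Fin n) (Fin n) ℤ :=
  Matrix.of fun a b => if biGrFun i j r ((a : ℕ) + 1) = (b : ℕ) + 1 then 1 else 0

/-- `u ∈ S_n` is the biGrassmannian permutation `[i,j,r]_b`, i.e. its values
are given by the defining formula. -/
def IsBiGrPerm (n i j r : ℕ) (u : Equiv.Perm (Fin n)) : Prop :=
  ∀ a : ℕ, 1 ≤ a → a ≤ n → pval u a = biGrFun i j r a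

/-- `(a,b)` (1-based) is in the Rothe diagram of the permutation `w`:
`w(a) > b` and `w⁻¹(b) > a`. -/
def InPermDiagram {n : ℕ} (w : Equiv.Perm (Fin n)) (a b : ℕ) : Prop :=
  1 ≤ a ∧ a ≤ n ∧ 1 ≤ b ∧ b ≤ n ∧ b < pval w a ∧ a < pval w⁻¹ b

/-- `(a,b)` is in the essential set of the permutation `w`. -/
def InPermEss {n : ℕ} (w : Equiv.Perm (Fin n)) (a b : ℕ) : Prop :=
  InPermDiagram w a b ∧ ¬ InPermDiagram w (a + 1) b ∧ ¬ InPermDiagram w a (b + 1)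

/-- `w` has a descent at (1-based) position `d`: `w(d) > w(d+1)`. -/
def HasDescentAt {n : ℕ} (w : Equiv.Perm (Fin n)) (d : ℕ) : Prop :=
  1 ≤ d ∧ d < n ∧ pval w (d + 1) < pval w d

/-- `u` is biGrassmannian: both `u` and `u⁻¹` have a unique descent. -/
def IsBiGrassmannian {n : ℕ} (u : Equiv.Perm (Fin n)) : Prop :=
  (∃! d : ℕ, HasDescentAt u d) ∧ (∃! d : ℕ, HasDescentAt u⁻¹ d)

section Helpers

variable {n : ℕ}

lemma cornerSum_eq_sum_row (A : Matrix (Fin n) (Fin n) ℤ) (i j : ℕ) :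
    cornerSum A i j = ∑ k ∈ Finset.Icc 1 i, rowPartial A k j := rfl

lemma cornerSum_eq_sum_col (A : Matrix (Fin n) (Fin n) ℤ) (i j : ℕ) :
    cornerSum A i j = ∑ l ∈ Finset.Icc 1 j, colPartial A i l := Finset.sum_comm

lemma sum_Icc_split (g : ℕ → ℤ) {i i' : ℕ} (h : i ≤ i') :
    ∑ k ∈ Finset.Icc 1 i', g k
      = (∑ k ∈ Finset.Icc 1 i, g k) + ∑ k ∈ Finset.Icc (i + 1) i', g k := by
  rw [show Finset.Icc 1 i = Finset.Ioc 0 i by rw [← Finset.Icc_add_one_left_eq_Ioc]; rfl,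
      show Finset.Icc (i+1) i' = Finset.Ioc i i' by rw [← Finset.Icc_add_one_left_eq_Ioc],
      show Finset.Icc 1 i' = Finset.Ioc 0 i' by rw [← Finset.Icc_add_one_left_eq_Ioc]; rfl]
  exact (Finset.sum_Ioc_consecutive _ (Nat.zero_le i) h).symm

lemma pval_mem (u : Equiv.Perm (Fin n)) {a : ℕ} (h1 : 1 ≤ a) (h2 : a ≤ n) :
    1 ≤ pval u a ∧ pval u a ≤ n := by
  unfold pval
  rw [dif_pos ⟨h1, h2⟩]
  have := (u ⟨a - 1, by omega⟩).isLt
  omega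

lemma pval_inj (u : Equiv.Perm (Fin n)) {a b : ℕ} (ha1 : 1 ≤ a) (ha2 : a ≤ n)
    (hb1 : 1 ≤ b) (hb2 : b ≤ n) (h : pval u a = pval u b) : a = b := by
  unfold pval at h
  rw [dif_pos ⟨ha1, ha2⟩, dif_pos ⟨hb1, hb2⟩] at h
  have : (⟨a - 1, by omega⟩ : Fin n) = ⟨b - 1, by omega⟩ :=
    u.injective (Fin.ext (by omega))
  have := Fin.mk.injEq (a-1) _ (b-1) _ ▸ this
  omega

lemma pval_def (u : Equiv.Perm (Fin n)) {a : ℕ} (h1 : 1 ≤ a) (h2 : a ≤ n) :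
    pval u a = ((u ⟨a - 1, by omega⟩ : Fin n) : ℕ) + 1 := dif_pos ⟨h1, h2⟩

lemma entry1_perm (u : Equiv.Perm (Fin n)) {k : ℕ} (l : ℕ) (hk1 : 1 ≤ k) (hk2 : k ≤ n) :
    entry1 (permMatrix u) k l = if l = pval u k then 1 else 0 := by
  have hpv := pval_mem u hk1 hk2
  rw [pval_def u hk1 hk2] at hpv ⊢
  unfold entry1 permMatrix
  by_cases hl : 1 ≤ l ∧ l ≤ n
  · rw [dif_pos ⟨hk1, hk2, hl.1, hl.2⟩]
    simp only [Matrix.of_apply]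
    congr 1
    rw [Fin.ext_iff]
    simp only [eq_iff_iff]
    constructor <;> intro h <;> omega
  · rw [dif_neg (by tauto), if_neg (by omega)]

lemma rowPartial_perm (u : Equiv.Perm (Fin n)) {k : ℕ} (j : ℕ) (hk1 : 1 ≤ k) (hk2 : k ≤ n) :
    rowPartial (permMatrix u) k j = if pval u k ≤ j then 1 else 0 := by
  have hpv := pval_mem u hk1 hk2
  unfold rowPartial
  rw [Finset.sum_congr rfl (fun l _ => entry1_perm u l hk1 hk2)]
  rw [Finset.sum_ite_eq' (Finset.Icc 1 j) (pval u k) (fun _ => (1 : ℤ))]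
  simp only [Finset.mem_Icc]
  congr 1
  simp only [eq_iff_iff]
  omega

lemma cornerSum_perm (u : Equiv.Perm (Fin n)) {i : ℕ} (j : ℕ) (hi : i ≤ n) :
    cornerSum (permMatrix u) i j
      = ∑ k ∈ Finset.Icc 1 i, (if pval u k ≤ j then (1 : ℤ) else 0) := by
  rw [cornerSum_eq_sum_row]
  refine Finset.sum_congr rfl fun k hk => ?_
  rw [Finset.mem_Icc] at hk
  exact rowPartial_perm u j hk.1 (le_trans hk.2 hi)

lemma pval_inv (u : Equiv.Perm (Fin n)) {l : ℕ} (hl1 : 1 ≤ l) (hl2 : l ≤ n) :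
    pval u (pval u⁻¹ l) = l := by
  have hmem := pval_mem u⁻¹ hl1 hl2
  rw [pval_def u⁻¹ hl1 hl2] at hmem ⊢
  rw [pval_def u (by omega) (by omega : ((u⁻¹ ⟨l - 1, by omega⟩ : Fin n) : ℕ) + 1 ≤ n)]
  simp only [Nat.add_sub_cancel, Fin.eta, Equiv.Perm.inv_def, Equiv.apply_symm_apply]
  omega

lemma cornerSum_perm_full (u : Equiv.Perm (Fin n)) {j : ℕ} (hj1 : 1 ≤ j) (hj2 : j ≤ n) :
    cornerSum (permMatrix u) n j = j := by
  rw [cornerSum_eq_sum_col]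
  have hcol : ∀ l ∈ Finset.Icc 1 j, colPartial (permMatrix u) n l = 1 := by
    intro l hl
    rw [Finset.mem_Icc] at hl
    have hl2 : l ≤ n := le_trans hl.2 hj2
    have hinv := pval_mem u⁻¹ hl.1 hl2
    have hpv := pval_inv u hl.1 hl2
    have hcongr : ∀ k ∈ Finset.Icc 1 n,
        entry1 (permMatrix u) k l = (if k = pval u⁻¹ l then (1 : ℤ) else 0) := by
      intro k hk
      rw [Finset.mem_Icc] at hk
      rw [entry1_perm u l hk.1 hk.2]
      by_cases h : l = pval u k
      · have : pval u⁻¹ l = k := by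
          apply pval_inj u hinv.1 hinv.2 hk.1 hk.2
          rw [hpv, h]
        rw [if_pos h, if_pos this.symm]
      · rw [if_neg h, if_neg (fun hc => h (by rw [hc, hpv]))]
    unfold colPartial
    rw [Finset.sum_congr rfl hcongr,
      Finset.sum_ite_eq' (Finset.Icc 1 n) (pval u⁻¹ l) (fun _ => (1 : ℤ)),
      if_pos (Finset.mem_Icc.mpr ⟨hinv.1, hinv.2⟩)]
  rw [Finset.sum_congr rfl hcol, Finset.sum_const, Nat.card_Icc]
  simp

lemma cs_le_row (A : Matrix (Fin n) (Fin n) ℤ)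
    (hr : ∀ i j : ℕ, rowPartial A i j = 0 ∨ rowPartial A i j = 1) (i j : ℕ) :
    cornerSum A i j ≤ (i : ℤ) := by
  rw [cornerSum_eq_sum_row]
  calc ∑ k ∈ Finset.Icc 1 i, rowPartial A k j ≤ ∑ _k ∈ Finset.Icc 1 i, (1 : ℤ) :=
        Finset.sum_le_sum (fun k _ => by rcases hr k j with h | h <;> omega)
    _ = (i : ℤ) := by rw [Finset.sum_const, Nat.card_Icc]; simp

lemma cs_le_col (A : Matrix (Fin n) (Fin n) ℤ)
    (hc : ∀ i j : ℕ, colPartial A i j = 0 ∨ colPartial A i j = 1) (i j : ℕ) :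
    cornerSum A i j ≤ (j : ℤ) := by
  rw [cornerSum_eq_sum_col]
  calc ∑ l ∈ Finset.Icc 1 j, colPartial A i l ≤ ∑ _l ∈ Finset.Icc 1 j, (1 : ℤ) :=
        Finset.sum_le_sum (fun l _ => by rcases hc i l with h | h <;> omega)
    _ = (j : ℤ) := by rw [Finset.sum_const, Nat.card_Icc]; simp

lemma cs_mono (A : Matrix (Fin n) (Fin n) ℤ)
    (hr : ∀ i j : ℕ, rowPartial A i j = 0 ∨ rowPartial A i j = 1) {i i' : ℕ}
    (h : i ≤ i') (j : ℕ) : cornerSum A i j ≤ cornerSum A i' j := by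
  rw [cornerSum_eq_sum_row, cornerSum_eq_sum_row, sum_Icc_split _ h]
  have : (0 : ℤ) ≤ ∑ k ∈ Finset.Icc (i + 1) i', rowPartial A k j :=
    Finset.sum_nonneg (fun k _ => by rcases hr k j with h | h <;> omega)
  omega

lemma cs_lip (A : Matrix (Fin n) (Fin n) ℤ)
    (hr : ∀ i j : ℕ, rowPartial A i j = 0 ∨ rowPartial A i j = 1) {i i' : ℕ}
    (h : i ≤ i') (j : ℕ) :
    cornerSum A i' j ≤ cornerSum A i j + (i' - i : ℕ) := by
  rw [cornerSum_eq_sum_row, cornerSum_eq_sum_row, sum_Icc_split _ h]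
  have : ∑ k ∈ Finset.Icc (i + 1) i', rowPartial A k j
      ≤ ∑ _k ∈ Finset.Icc (i + 1) i', (1 : ℤ) :=
    Finset.sum_le_sum (fun k _ => by rcases hr k j with h | h <;> omega)
  rw [Finset.sum_const, Nat.card_Icc] at this
  simp only [nsmul_eq_mul, mul_one] at this
  have hcard : ((i' + 1 - (i + 1) : ℕ) : ℤ) = ((i' - i : ℕ) : ℤ) := by push_cast; omega
  omega

lemma pval_step (u : Equiv.Perm (Fin n)) (d : ℕ)
    (huniq : ∀ a : ℕ, HasDescentAt u a → a = d) {a : ℕ}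
    (h1 : 1 ≤ a) (h2 : a < n) (h3 : a ≠ d) : pval u a ≤ pval u (a + 1) := by
  by_contra h
  push_neg at h
  exact h3 (huniq a ⟨h1, h2, h⟩)

lemma pval_mono (u : Equiv.Perm (Fin n)) (d : ℕ)
    (huniq : ∀ a : ℕ, HasDescentAt u a → a = d) {a b : ℕ}
    (ha : 1 ≤ a) (hab : a ≤ b) :
    b ≤ n → (b ≤ d ∨ d < a) → pval u a ≤ pval u b := by
  induction b, hab using Nat.le_induction with
  | base => intro _ _; exact le_refl _
  | succ b hb ih =>
    intro hbn hside
    have hstep : pval u b ≤ pval u (b + 1) := by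
      apply pval_step u d huniq (by omega) (by omega)
      rcases hside with h | h <;> omega
    have hprev : pval u a ≤ pval u b := by
      apply ih (by omega)
      rcases hside with h | h
      · exact Or.inl (by omega)
      · exact Or.inr h
    omega

end Helpers

/-- Let `A ∈ ASM(n)` and let `u ∈ S_n` be a Grassmannian
permutation with its unique descent at position `d`.  If
`r_A(d,j) ≤ r_u(d,j)` for all `j = 1, ..., n`, then `u ≤ A` in the order on
`ASM(n)`, i.e. `r_A(i,j) ≤ r_u(i,j)` for all `1 ≤ i,j ≤ n`. -/
theorem stmt10 {n : ℕ} (A : Matrix (Fin n) (Fin n) ℤ) (hA : IsASM A)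
    (u : Equiv.Perm (Fin n)) (d : ℕ) (hd : HasDescentAt u d)
    (huniq : ∀ a : ℕ, HasDescentAt u a → a = d)
    (hrow : ∀ j : ℕ, 1 ≤ j → j ≤ n →
      cornerSum A d j ≤ cornerSum (permMatrix u) d j) :
    ∀ i j : ℕ, 1 ≤ i → i ≤ n → 1 ≤ j → j ≤ n →
      cornerSum A i j ≤ cornerSum (permMatrix u) i j := by
  obtain ⟨hd1, hdn, hdlt⟩ := hd
  obtain ⟨hr, hc, hrn, hcn⟩ := hA
  intro i j hi1 hi2 hj1 hj2
  have key := hrow j hj1 hj2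
  set f : ℕ → ℤ := fun k => if pval u k ≤ j then (1 : ℤ) else 0 with hf
  have hf01 : ∀ k, 0 ≤ f k ∧ f k ≤ 1 := by
    intro k; simp only [hf]; split <;> omega
  have hcsP : ∀ m : ℕ, m ≤ n →
      cornerSum (permMatrix u) m j = ∑ k ∈ Finset.Icc 1 m, f k := fun m hm =>
    cornerSum_perm u j hm
  rcases le_or_gt i d with hid | hid
  · -- i ≤ d
    have hAd : cornerSum A i j ≤ cornerSum A d j := cs_mono A hr hid j
    by_cases hex : ∃ a, 1 ≤ a ∧ a ≤ i ∧ j < pval u a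
    · obtain ⟨a₀, ha1, ha2, ha3⟩ := hex
      have hzero : ∀ k ∈ Finset.Icc a₀ d, f k = 0 := by
        intro k hk
        rw [Finset.mem_Icc] at hk
        have : pval u a₀ ≤ pval u k :=
          pval_mono u d huniq ha1 hk.1 (by omega) (Or.inl hk.2)
        simp only [hf]
        rw [if_neg (by omega)]
      have hsplit : cornerSum (permMatrix u) d j
          = ∑ k ∈ Finset.Icc 1 (a₀ - 1), f k := by
        rw [hcsP d (by omega), sum_Icc_split f (show a₀ - 1 ≤ d by omega),
          show a₀ - 1 + 1 = a₀ by omega, Finset.sum_eq_zero hzero, add_zero]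
      have hle : ∑ k ∈ Finset.Icc 1 (a₀ - 1), f k ≤ ∑ k ∈ Finset.Icc 1 i, f k := by
        rw [sum_Icc_split f (show a₀ - 1 ≤ i by omega)]
        have : (0 : ℤ) ≤ ∑ k ∈ Finset.Icc (a₀ - 1 + 1) i, f k :=
          Finset.sum_nonneg (fun k _ => (hf01 k).1)
        omega
      rw [hcsP i hi2]
      rw [hsplit] at key
      linarith
    · push_neg at hex
      have hall : ∀ k ∈ Finset.Icc 1 i, f k = 1 := by
        intro k hk
        rw [Finset.mem_Icc] at hk
        simp only [hf]
        rw [if_pos (hex k hk.1 hk.2)]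
      have hPi : cornerSum (permMatrix u) i j = (i : ℤ) := by
        rw [hcsP i hi2, Finset.sum_congr rfl hall, Finset.sum_const, Nat.card_Icc]
        simp
      rw [hPi]
      exact cs_le_row A hr i j
  · -- d < i
    by_cases hex : ∃ a, d < a ∧ a ≤ i ∧ j < pval u a
    · obtain ⟨a₀, ha1, ha2, ha3⟩ := hex
      have hzero : ∀ k ∈ Finset.Icc a₀ n, f k = 0 := by
        intro k hk
        rw [Finset.mem_Icc] at hk
        have : pval u a₀ ≤ pval u k :=
          pval_mono u d huniq (by omega) hk.1 hk.2 (Or.inr ha1)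
        simp only [hf]
        rw [if_neg (by omega)]
      have hsplit : cornerSum (permMatrix u) n j
          = ∑ k ∈ Finset.Icc 1 (a₀ - 1), f k := by
        rw [hcsP n le_rfl, sum_Icc_split f (show a₀ - 1 ≤ n by omega),
          show a₀ - 1 + 1 = a₀ by omega, Finset.sum_eq_zero hzero, add_zero]
      have hle : ∑ k ∈ Finset.Icc 1 (a₀ - 1), f k ≤ ∑ k ∈ Finset.Icc 1 i, f k := by
        rw [sum_Icc_split f (show a₀ - 1 ≤ i by omega)]
        have : (0 : ℤ) ≤ ∑ k ∈ Finset.Icc (a₀ - 1 + 1) i, f k :=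
          Finset.sum_nonneg (fun k _ => (hf01 k).1)
        omega
      have hfull : cornerSum (permMatrix u) n j = (j : ℤ) :=
        cornerSum_perm_full u hj1 hj2
      have hAj : cornerSum A i j ≤ (j : ℤ) := cs_le_col A hc i j
      rw [hcsP i hi2]
      rw [hfull] at hsplit
      linarith
    · push_neg at hex
      have hsplit : cornerSum (permMatrix u) i j
          = cornerSum (permMatrix u) d j + ((i - d : ℕ) : ℤ) := by
        rw [hcsP i hi2, hcsP d (by omega), sum_Icc_split f (show d ≤ i by omega)]
        congr 1
        have hones : ∀ k ∈ Finset.Icc (d + 1) i, f k = 1 := by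
          intro k hk
          rw [Finset.mem_Icc] at hk
          simp only [hf]
          rw [if_pos (hex k (by omega) hk.2)]
        rw [Finset.sum_congr rfl hones, Finset.sum_const, Nat.card_Icc]
        simp
      have hAlip : cornerSum A i j ≤ cornerSum A d j + ((i - d : ℕ) : ℤ) :=
        cs_lip A hr (by omega) j
      rw [hsplit]
      linarith
end

section
/- Every partial alternating sign matrix has a completion to an honest ASM: for every A ∈ PA(n) there exist an integer N with n ≤ N ≤ 2n and a matrix Ã ∈ ASM(N) such that the submatrix of à consisting of its first n rows and first n columns equals A. -/
section Aux

variable {n : ℕ} (A : Matrix (Fin n) (Fin n) ℤ)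

/-- Full sum of row `i` (0-based). -/
def rS (i : Fin n) : ℤ := rowPartial A ((i : ℕ) + 1) n
/-- Full sum of column `j` (0-based). -/
def cS (j : Fin n) : ℤ := colPartial A n ((j : ℕ) + 1)

def SrF : Finset (Fin n) := Finset.univ.filter fun i => rS A i = 1
def ScF : Finset (Fin n) := Finset.univ.filter fun j => cS A j = 1

lemma mem_SrF {i : Fin n} : i ∈ SrF A ↔ rS A i = 1 := by simp [SrF]
lemma mem_ScF {j : Fin n} : j ∈ ScF A ↔ cS A j = 1 := by simp [ScF]

lemma entry1_zero {i j : ℕ} (h : ¬(1 ≤ i ∧ i ≤ n ∧ 1 ≤ j ∧ j ≤ n)) :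
    entry1 A i j = 0 := dif_neg h

lemma rowPartial_stab (i : ℕ) {j : ℕ} (hj : n ≤ j) :
    rowPartial A i j = rowPartial A i n := by
  unfold rowPartial
  refine (Finset.sum_subset (Finset.Icc_subset_Icc_right hj) ?_).symm
  intro l hl hln
  simp only [Finset.mem_Icc] at hl hln
  exact entry1_zero A (by omega)

lemma colPartial_stab (j : ℕ) {i : ℕ} (hi : n ≤ i) :
    colPartial A i j = colPartial A n j := by
  unfold colPartial
  refine (Finset.sum_subset (Finset.Icc_subset_Icc_right hi) ?_).symm
  intro k hk hkn
  simp only [Finset.mem_Icc] at hk hkn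
  exact entry1_zero A (by omega)

lemma sum_swap_rc : ∑ i, rS A i = ∑ j, cS A j := by
  have e1 : ∑ i : Fin n, rS A i = ∑ m ∈ Finset.range n, rowPartial A (m + 1) n :=
    Fin.sum_univ_eq_sum_range (fun m => rowPartial A (m + 1) n) n
  have e2 : ∑ j : Fin n, cS A j = ∑ m ∈ Finset.range n, colPartial A n (m + 1) :=
    Fin.sum_univ_eq_sum_range (fun m => colPartial A n (m + 1)) n
  have e3 : ∑ k ∈ Finset.Icc 1 n, rowPartial A k n
      = ∑ m ∈ Finset.range n, rowPartial A (m + 1) n := by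
    rw [← Finset.Ico_add_one_right_eq_Icc, Finset.sum_Ico_eq_sum_range, Nat.add_sub_cancel]
    exact Finset.sum_congr rfl fun m _ => by rw [Nat.add_comm]
  have e4 : ∑ l ∈ Finset.Icc 1 n, colPartial A n l
      = ∑ m ∈ Finset.range n, colPartial A n (m + 1) := by
    rw [← Finset.Ico_add_one_right_eq_Icc, Finset.sum_Ico_eq_sum_range, Nat.add_sub_cancel]
    exact Finset.sum_congr rfl fun m _ => by rw [Nat.add_comm]
  rw [e1, e2, ← e3, ← e4]
  unfold rowPartial colPartial
  exact Finset.sum_comm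

lemma cardEq (hA : IsPartialASM A) : (ScF A).card = (SrF A).card := by
  have h1 : ((SrF A).card : ℤ) = ∑ i, rS A i := by
    rw [SrF, ← Finset.sum_boole]
    refine Finset.sum_congr rfl fun i _ => ?_
    rcases hA.1 ((i : ℕ) + 1) n with h | h <;> simp [rS, h]
  have h2 : ((ScF A).card : ℤ) = ∑ j, cS A j := by
    rw [ScF, ← Finset.sum_boole]
    refine Finset.sum_congr rfl fun j _ => ?_
    rcases hA.2 n ((j : ℕ) + 1) with h | h <;> simp [cS, h]
  have := h2.trans ((sum_swap_rc A).symm.trans h1.symm)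
  exact_mod_cast this

noncomputable def eqv (hA : IsPartialASM A) : {x // x ∈ ScF A} ≃ {x // x ∈ SrF A} :=
  Finset.equivOfCardEq (cardEq A hA)

variable (hA : IsPartialASM A)

noncomputable def Bmat : Matrix (Fin (2 * n)) (Fin (2 * n)) ℤ :=
  Matrix.of fun a b =>
    if ha : (a : ℕ) < n then
      if hb : (b : ℕ) < n then A ⟨a, ha⟩ ⟨b, hb⟩
      else if (b : ℕ) = n + (a : ℕ) ∧ rS A ⟨a, ha⟩ = 0 then 1 else 0
    else
      if hb : (b : ℕ) < n then
        (if (a : ℕ) = n + (b : ℕ) ∧ cS A ⟨b, hb⟩ = 0 then 1 else 0)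
      else
        if h : (⟨(a : ℕ) - n, by omega⟩ : Fin n) ∈ ScF A then
          (if ((eqv A hA ⟨_, h⟩ : Fin n) : ℕ) = (b : ℕ) - n then 1 else 0)
        else 0

lemma entry1_B_zero {i l : ℕ} (h : ¬(1 ≤ i ∧ i ≤ 2 * n ∧ 1 ≤ l ∧ l ≤ 2 * n)) :
    entry1 (Bmat A hA) i l = 0 := dif_neg h

set_option maxHeartbeats 1000000 in
lemma entry1_B_top {i l : ℕ} (hi1 : 1 ≤ i) (hin : i ≤ n) (hl : 1 ≤ l)
    (x : Fin n) (hx : (x : ℕ) = i - 1) :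
    entry1 (Bmat A hA) i l = entry1 A i l +
      (if l = n + i ∧ rS A x = 0 then 1 else 0) := by
  have hxx : (⟨i - 1, by omega⟩ : Fin n) = x := Fin.ext (by simp [hx])
  by_cases hl2 : l ≤ 2 * n
  · rw [entry1, dif_pos ⟨hi1, by omega, hl, by omega⟩]
    show Bmat A hA ⟨i - 1, by omega⟩ ⟨l - 1, by omega⟩ = _
    rw [Bmat]
    simp only [Matrix.of_apply, Fin.val_mk]
    rw [dif_pos (show i - 1 < n by omega)]
    by_cases hln : l ≤ n
    · rw [dif_pos (show l - 1 < n by omega), entry1, dif_pos ⟨hi1, hin, hl, hln⟩]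
      rw [if_neg (by omega)]
      ring
    · rw [dif_neg (show ¬ l - 1 < n by omega)]
      rw [entry1_zero A (by omega), zero_add]
      simp only [hxx]
      congr 1
      exact propext ⟨fun ⟨h1, h2⟩ => ⟨by omega, h2⟩, fun ⟨h1, h2⟩ => ⟨by omega, h2⟩⟩
  · rw [entry1_B_zero A hA (by omega), entry1_zero A (by omega),
      if_neg (by omega), add_zero]

set_option maxHeartbeats 1000000 in
lemma entry1_B_left {k j : ℕ} (hj1 : 1 ≤ j) (hjn : j ≤ n) (hk : 1 ≤ k)
    (x : Fin n) (hx : (x : ℕ) = j - 1) :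
    entry1 (Bmat A hA) k j = entry1 A k j +
      (if k = n + j ∧ cS A x = 0 then 1 else 0) := by
  have hxx : (⟨j - 1, by omega⟩ : Fin n) = x := Fin.ext (by simp [hx])
  by_cases hk2 : k ≤ 2 * n
  · rw [entry1, dif_pos ⟨hk, by omega, hj1, by omega⟩]
    show Bmat A hA ⟨k - 1, by omega⟩ ⟨j - 1, by omega⟩ = _
    rw [Bmat]
    simp only [Matrix.of_apply, Fin.val_mk]
    by_cases hkn : k ≤ n
    · rw [dif_pos (show k - 1 < n by omega), dif_pos (show j - 1 < n by omega),
        entry1, dif_pos ⟨hk, hkn, hj1, hjn⟩, if_neg (by omega)]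
      ring
    · rw [dif_neg (show ¬ k - 1 < n by omega), dif_pos (show j - 1 < n by omega)]
      rw [entry1_zero A (by omega), zero_add]
      simp only [hxx]
      congr 1
      exact propext ⟨fun ⟨h1, h2⟩ => ⟨by omega, h2⟩, fun ⟨h1, h2⟩ => ⟨by omega, h2⟩⟩
  · rw [entry1_B_zero A hA (by omega), entry1_zero A (by omega),
      if_neg (by omega), add_zero]

set_option maxHeartbeats 2000000 in
lemma entry1_B_bot {i l : ℕ} (hi1 : n + 1 ≤ i) (hi2 : i ≤ 2 * n) (hl : 1 ≤ l)
    (x : Fin n) (hx : (x : ℕ) = i - 1 - n) :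
    entry1 (Bmat A hA) i l =
      (if l = i - n ∧ cS A x = 0 then 1 else 0) +
      (if h : x ∈ ScF A then
        (if l = n + ((eqv A hA ⟨x, h⟩ : Fin n) : ℕ) + 1 then 1 else 0) else 0) := by
  have hxx : (⟨i - 1 - n, by omega⟩ : Fin n) = x := Fin.ext (by simp [hx])
  by_cases hl2 : l ≤ 2 * n
  · rw [entry1, dif_pos ⟨by omega, hi2, hl, hl2⟩]
    show Bmat A hA ⟨i - 1, by omega⟩ ⟨l - 1, by omega⟩ = _
    rw [Bmat]
    simp only [Matrix.of_apply, Fin.val_mk]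
    rw [dif_neg (show ¬ i - 1 < n by omega)]
    simp only [hxx]
    by_cases hln : l ≤ n
    · rw [dif_pos (show l - 1 < n by omega)]
      have h2 : (if h : x ∈ ScF A then
          (if l = n + ((eqv A hA ⟨x, h⟩ : Fin n) : ℕ) + 1 then (1:ℤ) else 0) else 0) = 0 := by
        split_ifs with h h3
        · omega
        · rfl
        · rfl
      simp only [h2, add_zero]
      by_cases hc : i - 1 = n + (l - 1)
      · have hfin : (⟨l - 1, show l - 1 < n by omega⟩ : Fin n) = x :=
          Fin.ext (by simp [hx]; omega)
        simp only [hfin]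
        congr 1
        exact propext ⟨fun ⟨h1, h2⟩ => ⟨by omega, h2⟩, fun ⟨h1, h2⟩ => ⟨by omega, h2⟩⟩
      · rw [if_neg (by rintro ⟨h1, -⟩; omega), if_neg (by rintro ⟨h1, -⟩; omega)]
    · rw [dif_neg (show ¬ l - 1 < n by omega)]
      have hz : (if l = i - n ∧ cS A x = 0 then (1:ℤ) else 0) = 0 :=
        if_neg (by rintro ⟨h1, -⟩; omega)
      simp only [hz, zero_add]
      split_ifs with h1 h2 h3 h3
      · rfl
      · omega
      · omega
      · rfl
      · rfl
  · rw [entry1_B_zero A hA (by omega)]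
    have hz : (if l = i - n ∧ cS A x = 0 then (1:ℤ) else 0) = 0 :=
      if_neg (by rintro ⟨h1, -⟩; omega)
    simp only [hz, zero_add]
    split_ifs with h1 h2
    · have := ((eqv A hA ⟨x, h1⟩ : Fin n)).isLt; omega
    · rfl
    · rfl

lemma entry_br (a' b' : Fin n) :
    (if h : a' ∈ ScF A then
      (if ((eqv A hA ⟨a', h⟩ : Fin n) : ℕ) = (b' : ℕ) then (1:ℤ) else 0) else 0)
    = (if h : b' ∈ SrF A then
      (if (((eqv A hA).symm ⟨b', h⟩ : Fin n) : ℕ) = (a' : ℕ) then 1 else 0) else 0) := by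
  by_cases h1 : a' ∈ ScF A
  · rw [dif_pos h1]
    by_cases h2 : b' ∈ SrF A
    · rw [dif_pos h2]
      refine if_congr ⟨fun h => ?_, fun h => ?_⟩ rfl rfl
      · have he : eqv A hA ⟨a', h1⟩ = ⟨b', h2⟩ := Subtype.ext (Fin.ext h)
        rw [show ((⟨b', h2⟩ : {x // x ∈ SrF A})) = eqv A hA ⟨a', h1⟩ from he.symm,
          Equiv.symm_apply_apply]
      · have he : (eqv A hA).symm ⟨b', h2⟩ = ⟨a', h1⟩ := Subtype.ext (Fin.ext h)
        rw [show ((⟨a', h1⟩ : {x // x ∈ ScF A})) = (eqv A hA).symm ⟨b', h2⟩ from he.symm,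
          Equiv.apply_symm_apply]
    · rw [dif_neg h2, if_neg]
      intro hc
      exact h2 ((Fin.ext hc : (eqv A hA ⟨a', h1⟩ : Fin n) = b') ▸ (eqv A hA ⟨a', h1⟩).2)
  · rw [dif_neg h1]
    by_cases h2 : b' ∈ SrF A
    · rw [dif_pos h2, if_neg]
      intro hc
      exact h1 ((Fin.ext hc : ((eqv A hA).symm ⟨b', h2⟩ : Fin n) = a') ▸
        ((eqv A hA).symm ⟨b', h2⟩).2)
    · rw [dif_neg h2]

set_option maxHeartbeats 2000000 in
lemma entry1_B_right {k j : ℕ} (hj1 : n + 1 ≤ j) (hj2 : j ≤ 2 * n) (hk : 1 ≤ k)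
    (x : Fin n) (hx : (x : ℕ) = j - 1 - n) :
    entry1 (Bmat A hA) k j =
      (if k = j - n ∧ rS A x = 0 then 1 else 0) +
      (if h : x ∈ SrF A then
        (if k = n + (((eqv A hA).symm ⟨x, h⟩ : Fin n) : ℕ) + 1 then 1 else 0) else 0) := by
  have hxx : (⟨j - 1 - n, by omega⟩ : Fin n) = x := Fin.ext (by simp [hx])
  by_cases hk2 : k ≤ 2 * n
  · rw [entry1, dif_pos ⟨hk, hk2, by omega, hj2⟩]
    show Bmat A hA ⟨k - 1, by omega⟩ ⟨j - 1, by omega⟩ = _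
    rw [Bmat]
    simp only [Matrix.of_apply, Fin.val_mk]
    by_cases hkn : k ≤ n
    · rw [dif_pos (show k - 1 < n by omega), dif_neg (show ¬ j - 1 < n by omega)]
      have h2 : (if h : x ∈ SrF A then
          (if k = n + (((eqv A hA).symm ⟨x, h⟩ : Fin n) : ℕ) + 1 then (1:ℤ) else 0) else 0) = 0 := by
        split_ifs with h h3
        · omega
        · rfl
        · rfl
      simp only [h2, add_zero]
      by_cases hc : j - 1 = n + (k - 1)
      · have hfin : (⟨k - 1, show k - 1 < n by omega⟩ : Fin n) = x :=
          Fin.ext (by simp [hx]; omega)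
        simp only [hfin]
        congr 1
        exact propext ⟨fun ⟨g1, g2⟩ => ⟨by omega, g2⟩, fun ⟨g1, g2⟩ => ⟨by omega, g2⟩⟩
      · rw [if_neg (by rintro ⟨g1, -⟩; omega), if_neg (by rintro ⟨g1, -⟩; omega)]
    · rw [dif_neg (show ¬ k - 1 < n by omega), dif_neg (show ¬ j - 1 < n by omega)]
      have hz : (if k = j - n ∧ rS A x = 0 then (1:ℤ) else 0) = 0 :=
        if_neg (by rintro ⟨g1, -⟩; omega)
      simp only [hz, zero_add]
      have hb := entry_br A hA ⟨k - 1 - n, by omega⟩ x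
      simp only [Fin.val_mk, hx] at hb
      rw [hb]
      split_ifs with h1 h2 h3 h3
      · rfl
      · omega
      · omega
      · rfl
      · rfl
  · rw [entry1_B_zero A hA (by omega)]
    have hz : (if k = j - n ∧ rS A x = 0 then (1:ℤ) else 0) = 0 :=
      if_neg (by rintro ⟨g1, -⟩; omega)
    simp only [hz, zero_add]
    split_ifs with h1 h2
    · have := ((((eqv A hA).symm ⟨x, h1⟩ : Fin n))).isLt; omega
    · rfl
    · rfl

lemma rowPartial_B_zero {i : ℕ} (hi : ¬(1 ≤ i ∧ i ≤ 2 * n)) (j : ℕ) :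
    rowPartial (Bmat A hA) i j = 0 :=
  Finset.sum_eq_zero fun l _ => entry1_B_zero A hA (by omega)

lemma colPartial_B_zero {j : ℕ} (hj : ¬(1 ≤ j ∧ j ≤ 2 * n)) (i : ℕ) :
    colPartial (Bmat A hA) i j = 0 :=
  Finset.sum_eq_zero fun k _ => entry1_B_zero A hA (by omega)

lemma rowPartial_B_top {i : ℕ} (hi1 : 1 ≤ i) (hin : i ≤ n)
    (x : Fin n) (hx : (x : ℕ) = i - 1) (j : ℕ) :
    rowPartial (Bmat A hA) i j = rowPartial A i j +
      (if n + i ≤ j ∧ rS A x = 0 then 1 else 0) := by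
  unfold rowPartial
  rw [Finset.sum_congr rfl
      (fun l hl => entry1_B_top A hA hi1 hin (Finset.mem_Icc.mp hl).1 x hx),
    Finset.sum_add_distrib]
  congr 1
  simp only [ite_and]
  rw [Finset.sum_ite_eq' (Finset.Icc 1 j) (n + i) fun _ => if rS A x = 0 then (1:ℤ) else 0]
  simp only [Finset.mem_Icc]
  split_ifs <;> first | rfl | omega

lemma rowPartial_B_bot {i : ℕ} (hi1 : n + 1 ≤ i) (hi2 : i ≤ 2 * n)
    (x : Fin n) (hx : (x : ℕ) = i - 1 - n) (j : ℕ) :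
    rowPartial (Bmat A hA) i j =
      (if i - n ≤ j ∧ cS A x = 0 then 1 else 0) +
      (if h : x ∈ ScF A then
        (if n + ((eqv A hA ⟨x, h⟩ : Fin n) : ℕ) + 1 ≤ j then 1 else 0) else 0) := by
  unfold rowPartial
  rw [Finset.sum_congr rfl
      (fun l hl => entry1_B_bot A hA hi1 hi2 (Finset.mem_Icc.mp hl).1 x hx),
    Finset.sum_add_distrib]
  congr 1
  · simp only [ite_and]
    rw [Finset.sum_ite_eq' (Finset.Icc 1 j) (i - n) fun _ => if cS A x = 0 then (1:ℤ) else 0]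
    simp only [Finset.mem_Icc]
    split_ifs <;> first | rfl | omega
  · by_cases h : x ∈ ScF A
    · simp only [dif_pos h]
      rw [Finset.sum_ite_eq' (Finset.Icc 1 j)
        (n + ((eqv A hA ⟨x, h⟩ : Fin n) : ℕ) + 1) fun _ => (1:ℤ)]
      simp only [Finset.mem_Icc]
      split_ifs <;> first | rfl | omega
    · simp only [dif_neg h, Finset.sum_const_zero]

lemma colPartial_B_left {j : ℕ} (hj1 : 1 ≤ j) (hjn : j ≤ n)
    (x : Fin n) (hx : (x : ℕ) = j - 1) (i : ℕ) :
    colPartial (Bmat A hA) i j = colPartial A i j +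
      (if n + j ≤ i ∧ cS A x = 0 then 1 else 0) := by
  unfold colPartial
  rw [Finset.sum_congr rfl
      (fun k hk => entry1_B_left A hA hj1 hjn (Finset.mem_Icc.mp hk).1 x hx),
    Finset.sum_add_distrib]
  congr 1
  simp only [ite_and]
  rw [Finset.sum_ite_eq' (Finset.Icc 1 i) (n + j) fun _ => if cS A x = 0 then (1:ℤ) else 0]
  simp only [Finset.mem_Icc]
  split_ifs <;> first | rfl | omega

lemma colPartial_B_right {j : ℕ} (hj1 : n + 1 ≤ j) (hj2 : j ≤ 2 * n)
    (x : Fin n) (hx : (x : ℕ) = j - 1 - n) (i : ℕ) :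
    colPartial (Bmat A hA) i j =
      (if j - n ≤ i ∧ rS A x = 0 then 1 else 0) +
      (if h : x ∈ SrF A then
        (if n + (((eqv A hA).symm ⟨x, h⟩ : Fin n) : ℕ) + 1 ≤ i then 1 else 0) else 0) := by
  unfold colPartial
  rw [Finset.sum_congr rfl
      (fun k hk => entry1_B_right A hA hj1 hj2 (Finset.mem_Icc.mp hk).1 x hx),
    Finset.sum_add_distrib]
  congr 1
  · simp only [ite_and]
    rw [Finset.sum_ite_eq' (Finset.Icc 1 i) (j - n) fun _ => if rS A x = 0 then (1:ℤ) else 0]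
    simp only [Finset.mem_Icc]
    split_ifs <;> first | rfl | omega
  · by_cases h : x ∈ SrF A
    · simp only [dif_pos h]
      rw [Finset.sum_ite_eq' (Finset.Icc 1 i)
        (n + (((eqv A hA).symm ⟨x, h⟩ : Fin n) : ℕ) + 1) fun _ => (1:ℤ)]
      simp only [Finset.mem_Icc]
      split_ifs <;> first | rfl | omega
    · simp only [dif_neg h, Finset.sum_const_zero]

lemma rS_eq {i : ℕ} (hi1 : 1 ≤ i) (hin : i ≤ n) (h : i - 1 < n) :
    rS A ⟨i - 1, h⟩ = rowPartial A i n := by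
  unfold rS
  rw [Fin.val_mk, show i - 1 + 1 = i by omega]

lemma cS_eq {j : ℕ} (hj1 : 1 ≤ j) (hjn : j ≤ n) (h : j - 1 < n) :
    cS A ⟨j - 1, h⟩ = colPartial A n j := by
  unfold cS
  rw [Fin.val_mk, show j - 1 + 1 = j by omega]

lemma B_row01 (i j : ℕ) :
    rowPartial (Bmat A hA) i j = 0 ∨ rowPartial (Bmat A hA) i j = 1 := by
  by_cases hi : 1 ≤ i ∧ i ≤ 2 * n
  · by_cases hin : i ≤ n
    · have hb : i - 1 < n := by omega
      rw [rowPartial_B_top A hA hi.1 hin ⟨i - 1, hb⟩ rfl j]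
      have hrs := rS_eq A hi.1 hin hb
      by_cases hj : n + i ≤ j
      · right
        rw [rowPartial_stab A i (show n ≤ j by omega)]
        rcases hA.1 i n with h0 | h1
        · rw [if_pos ⟨hj, by rw [hrs, h0]⟩, h0]; norm_num
        · rw [if_neg (fun hc => by rw [hrs, h1] at hc; exact one_ne_zero hc.2), h1, add_zero]
      · rw [if_neg (fun hc => hj hc.1), add_zero]
        exact hA.1 i j
    · have hb : i - 1 - n < n := by omega
      set x : Fin n := ⟨i - 1 - n, hb⟩ with hxdef
      rw [rowPartial_B_bot A hA (by omega) hi.2 x rfl j]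
      by_cases h : x ∈ ScF A
      · have hc1 := (mem_ScF A).mp h
        rw [if_neg (by rintro ⟨-, hc⟩; omega), dif_pos h, zero_add]
        split_ifs <;> simp
      · rw [dif_neg h, add_zero]
        split_ifs <;> simp
  · exact Or.inl (rowPartial_B_zero A hA hi j)

lemma B_col01 (i j : ℕ) :
    colPartial (Bmat A hA) i j = 0 ∨ colPartial (Bmat A hA) i j = 1 := by
  by_cases hj : 1 ≤ j ∧ j ≤ 2 * n
  · by_cases hjn : j ≤ n
    · have hb : j - 1 < n := by omega
      rw [colPartial_B_left A hA hj.1 hjn ⟨j - 1, hb⟩ rfl i]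
      have hcs := cS_eq A hj.1 hjn hb
      by_cases hi : n + j ≤ i
      · right
        rw [colPartial_stab A j (show n ≤ i by omega)]
        rcases hA.2 n j with h0 | h1
        · rw [if_pos ⟨hi, by rw [hcs, h0]⟩, h0]; norm_num
        · rw [if_neg (fun hc => by rw [hcs, h1] at hc; exact one_ne_zero hc.2), h1, add_zero]
      · rw [if_neg (fun hc => hi hc.1), add_zero]
        exact hA.2 i j
    · have hb : j - 1 - n < n := by omega
      set x : Fin n := ⟨j - 1 - n, hb⟩ with hxdef
      rw [colPartial_B_right A hA (by omega) hj.2 x rfl i]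
      by_cases h : x ∈ SrF A
      · have hc1 := (mem_SrF A).mp h
        rw [if_neg (by rintro ⟨-, hc⟩; omega), dif_pos h, zero_add]
        split_ifs <;> simp
      · rw [dif_neg h, add_zero]
        split_ifs <;> simp
  · exact Or.inl (colPartial_B_zero A hA hj i)

lemma B_rowfull {i : ℕ} (hi1 : 1 ≤ i) (hi2 : i ≤ 2 * n) :
    rowPartial (Bmat A hA) i (2 * n) = 1 := by
  by_cases hin : i ≤ n
  · have hb : i - 1 < n := by omega
    rw [rowPartial_B_top A hA hi1 hin ⟨i - 1, hb⟩ rfl (2 * n)]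
    have hrs := rS_eq A hi1 hin hb
    rw [rowPartial_stab A i (show n ≤ 2 * n by omega)]
    rcases hA.1 i n with h0 | h1
    · rw [if_pos ⟨by omega, by rw [hrs, h0]⟩, h0]; norm_num
    · rw [if_neg (fun hc => by rw [hrs, h1] at hc; exact one_ne_zero hc.2), h1, add_zero]
  · have hb : i - 1 - n < n := by omega
    set x : Fin n := ⟨i - 1 - n, hb⟩ with hxdef
    rw [rowPartial_B_bot A hA (by omega) hi2 x rfl (2 * n)]
    by_cases h : x ∈ ScF A
    · have hc1 := (mem_ScF A).mp h
      rw [if_neg (by rintro ⟨-, hc⟩; omega), dif_pos h, zero_add,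
        if_pos (by have := ((eqv A hA ⟨x, h⟩ : Fin n)).isLt; omega)]
    · have hc0 : cS A x = 0 := by
        rcases hA.2 n ((x : ℕ) + 1) with h0 | h1
        · exact h0
        · exact absurd ((mem_ScF A).mpr h1) h
      rw [if_pos ⟨by omega, hc0⟩, dif_neg h, add_zero]

lemma B_colfull {j : ℕ} (hj1 : 1 ≤ j) (hj2 : j ≤ 2 * n) :
    colPartial (Bmat A hA) (2 * n) j = 1 := by
  by_cases hjn : j ≤ n
  · have hb : j - 1 < n := by omega
    rw [colPartial_B_left A hA hj1 hjn ⟨j - 1, hb⟩ rfl (2 * n)]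
    have hcs := cS_eq A hj1 hjn hb
    rw [colPartial_stab A j (show n ≤ 2 * n by omega)]
    rcases hA.2 n j with h0 | h1
    · rw [if_pos ⟨by omega, by rw [hcs, h0]⟩, h0]; norm_num
    · rw [if_neg (fun hc => by rw [hcs, h1] at hc; exact one_ne_zero hc.2), h1, add_zero]
  · have hb : j - 1 - n < n := by omega
    set x : Fin n := ⟨j - 1 - n, hb⟩ with hxdef
    rw [colPartial_B_right A hA (by omega) hj2 x rfl (2 * n)]
    by_cases h : x ∈ SrF A
    · have hc1 := (mem_SrF A).mp h
      rw [if_neg (by rintro ⟨-, hc⟩; omega), dif_pos h, zero_add,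
        if_pos (by have := (((eqv A hA).symm ⟨x, h⟩ : Fin n)).isLt; omega)]
    · have hc0 : rS A x = 0 := by
        rcases hA.1 ((x : ℕ) + 1) n with h0 | h1
        · exact h0
        · exact absurd ((mem_SrF A).mpr h1) h
      rw [if_pos ⟨by omega, hc0⟩, dif_neg h, add_zero]

lemma B_corner (h : n ≤ 2 * n) (a b : Fin n) :
    Bmat A hA (Fin.castLE h a) (Fin.castLE h b) = A a b := by
  rw [Bmat]
  simp only [Matrix.of_apply, Fin.coe_castLE]
  rw [dif_pos a.isLt, dif_pos b.isLt]

end Aux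

/-- Every partial ASM has a completion to an honest ASM: for
every `A ∈ PA(n)` there exist `n ≤ N ≤ 2n` and `Ã ∈ ASM(N)` whose northwest
`n × n` submatrix is `A`. -/
theorem stmt11 {n : ℕ} (A : Matrix (Fin n) (Fin n) ℤ) (hA : IsPartialASM A) :
    ∃ (N : ℕ) (h : n ≤ N) (B : Matrix (Fin N) (Fin N) ℤ),
      N ≤ 2 * n ∧ IsASM B ∧
      ∀ a b : Fin n, B (Fin.castLE h a) (Fin.castLE h b) = A a b := by
  exact ⟨2 * n, by omega, Bmat A hA, le_refl _,
    ⟨B_row01 A hA, B_col01 A hA,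
     fun i h1 h2 => B_rowfull A hA h1 h2,
     fun j h1 h2 => B_colfull A hA h1 h2⟩,
    fun a b => B_corner A hA (by omega) a b⟩
end

section
/- Let m ≤ n and regard S_m ⊆ S_n via the embedding where a permutation of {1,...,m} fixes all points of {m+1,...,n}. Suppose w ∈ S_n is an upper bound in Bruhat order to permutations w_1, ..., w_k ∈ S_m. Then there exists w' ∈ S_n fixing all points greater than m (i.e. w' ∈ S_m) such that w_i ≤ w' ≤ w in Bruhat order for all i = 1, ..., k. -/
namespace Stmt13Aux

set_option maxHeartbeats 1000000

variable {n : ℕ}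

/-- count of `a < i` (1-based `a+1 ≤ i`) with `w a + 1 ≤ j`. -/
def fcnt (w : Equiv.Perm (Fin n)) (i j : ℕ) : ℕ :=
  ∑ a : Fin n, if (a : ℕ) + 1 ≤ i ∧ ((w a : Fin n) : ℕ) + 1 ≤ j then 1 else 0

lemma fcnt_zero_left (w : Equiv.Perm (Fin n)) (j : ℕ) : fcnt w 0 j = 0 := by
  simp [fcnt]

lemma fcnt_zero_right (w : Equiv.Perm (Fin n)) (i : ℕ) : fcnt w i 0 = 0 := by
  simp [fcnt]

def rowadd (w : Equiv.Perm (Fin n)) (i j : ℕ) : ℕ :=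
  if h : i < n then (if ((w ⟨i, h⟩ : Fin n) : ℕ) + 1 ≤ j then 1 else 0) else 0

def coladd (w : Equiv.Perm (Fin n)) (i j : ℕ) : ℕ :=
  if h : j < n then (if ((w⁻¹ ⟨j, h⟩ : Fin n) : ℕ) + 1 ≤ i then 1 else 0) else 0

lemma rowadd_le_one (w : Equiv.Perm (Fin n)) (i j : ℕ) : rowadd w i j ≤ 1 := by
  unfold rowadd; split_ifs <;> omega

lemma coladd_le_one (w : Equiv.Perm (Fin n)) (i j : ℕ) : coladd w i j ≤ 1 := by
  unfold coladd; split_ifs <;> omega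

lemma rowadd_mono (w : Equiv.Perm (Fin n)) (i : ℕ) {j j' : ℕ} (h : j ≤ j') :
    rowadd w i j ≤ rowadd w i j' := by
  unfold rowadd; split_ifs <;> omega

lemma fcnt_succ_left (w : Equiv.Perm (Fin n)) (i j : ℕ) :
    fcnt w (i + 1) j = fcnt w i j + rowadd w i j := by
  have key : ∀ a : Fin n,
      (if (a : ℕ) + 1 ≤ i + 1 ∧ ((w a : Fin n) : ℕ) + 1 ≤ j then (1:ℕ) else 0)
      = (if (a : ℕ) + 1 ≤ i ∧ ((w a : Fin n) : ℕ) + 1 ≤ j then 1 else 0)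
        + (if ((a : ℕ) = i ∧ ((w a : Fin n) : ℕ) + 1 ≤ j) then 1 else 0) := by
    intro a; split_ifs <;> omega
  simp only [fcnt, key, Finset.sum_add_distrib]
  congr 1
  rcases Nat.lt_or_ge i n with h | h
  · rw [rowadd, dif_pos h]
    have key2 : ∀ a : Fin n,
        (if ((a : ℕ) = i ∧ ((w a : Fin n) : ℕ) + 1 ≤ j) then (1:ℕ) else 0)
        = if a = ⟨i, h⟩ then (if ((w ⟨i, h⟩ : Fin n) : ℕ) + 1 ≤ j then 1 else 0) else 0 := by
      intro a
      by_cases ha : a = ⟨i, h⟩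
      · subst ha; simp
      · have hv : ¬ ((a : ℕ) = i) := fun hc => ha (Fin.ext hc)
        simp [ha, hv]
    simp only [key2]
    rw [Finset.sum_ite_eq' Finset.univ]
    simp
  · rw [rowadd, dif_neg (by omega)]
    apply Finset.sum_eq_zero
    intro a _
    have := a.isLt
    split_ifs with hc
    · omega
    · rfl

lemma fcnt_succ_right (w : Equiv.Perm (Fin n)) (i j : ℕ) :
    fcnt w i (j + 1) = fcnt w i j + coladd w i j := by
  have key : ∀ a : Fin n,
      (if (a : ℕ) + 1 ≤ i ∧ ((w a : Fin n) : ℕ) + 1 ≤ j + 1 then (1:ℕ) else 0)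
      = (if (a : ℕ) + 1 ≤ i ∧ ((w a : Fin n) : ℕ) + 1 ≤ j then 1 else 0)
        + (if (((w a : Fin n) : ℕ) = j ∧ (a : ℕ) + 1 ≤ i) then 1 else 0) := by
    intro a; split_ifs <;> omega
  simp only [fcnt, key, Finset.sum_add_distrib]
  congr 1
  rcases Nat.lt_or_ge j n with h | h
  · rw [coladd, dif_pos h]
    have key2 : ∀ a : Fin n,
        (if (((w a : Fin n) : ℕ) = j ∧ (a : ℕ) + 1 ≤ i) then (1:ℕ) else 0)
        = if a = w⁻¹ ⟨j, h⟩ then (if ((w⁻¹ ⟨j, h⟩ : Fin n) : ℕ) + 1 ≤ i then 1 else 0) else 0 := by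
      intro a
      by_cases ha : a = w⁻¹ ⟨j, h⟩
      · subst ha
        simp
      · have hv : ¬ (((w a : Fin n) : ℕ) = j) := by
          intro hc
          apply ha
          have : w a = ⟨j, h⟩ := Fin.ext hc
          rw [← this]; simp
        rw [if_neg ha]; simp [hv]
    simp only [key2]
    rw [Finset.sum_ite_eq' Finset.univ]
    simp
  · rw [coladd, dif_neg (by omega)]
    apply Finset.sum_eq_zero
    intro a _
    have := (w a).isLt
    split_ifs with hc
    · omega
    · rfl


lemma fcnt_mono_right (w : Equiv.Perm (Fin n)) (i : ℕ) {j j' : ℕ} (h : j ≤ j') :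
    fcnt w i j ≤ fcnt w i j' := by
  apply Finset.sum_le_sum
  intro a _
  split_ifs <;> omega

lemma fcnt_mono_left (w : Equiv.Perm (Fin n)) {i i' : ℕ} (j : ℕ) (h : i ≤ i') :
    fcnt w i j ≤ fcnt w i' j := by
  apply Finset.sum_le_sum
  intro a _
  split_ifs <;> omega

lemma fcnt_le_n (w : Equiv.Perm (Fin n)) (i j : ℕ) : fcnt w i j ≤ n := by
  calc fcnt w i j ≤ ∑ _a : Fin n, 1 := by
        apply Finset.sum_le_sum; intro a _; split_ifs <;> omega
    _ = n := by simp

lemma fcnt_stab_left (w : Equiv.Perm (Fin n)) {i : ℕ} (j : ℕ) (h : n ≤ i) :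
    fcnt w (i + 1) j = fcnt w i j := by
  apply Finset.sum_congr rfl
  intro a _
  have := a.isLt
  split_ifs <;> omega

lemma fcnt_stab_right (w : Equiv.Perm (Fin n)) (i : ℕ) {j : ℕ} (h : n ≤ j) :
    fcnt w i (j + 1) = fcnt w i j := by
  apply Finset.sum_congr rfl
  intro a _
  have := (w a).isLt
  split_ifs <;> omega

/-- counting lemma: number of `a : Fin n` with `a < c` is `min c n`. -/
lemma cnt_lt (c : ℕ) : (∑ a : Fin n, if (a : ℕ) < c then (1:ℕ) else 0) = min c n := by
  have : (∑ a : Fin n, if (a : ℕ) < c then (1:ℕ) else 0)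
      = ∑ x ∈ Finset.range n, (if x < c then 1 else 0) :=
    Fin.sum_univ_eq_sum_range (fun x => if x < c then 1 else 0) n
  rw [this, ← Finset.card_filter]
  have : (Finset.range n).filter (fun x => x < c) = Finset.range (min c n) := by
    ext x; simp [Finset.mem_filter, Finset.mem_range]; omega
  rw [this, Finset.card_range]

-- new material
lemma fcnt_add_right (w : Equiv.Perm (Fin n)) (i j : ℕ) :
    ∀ d : ℕ, fcnt w i (j + d) ≤ fcnt w i j + d := by
  intro d
  induction d with
  | zero => simp
  | succ d ih =>
      have h1 := fcnt_succ_right w i (j + d)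
      have h2 := coladd_le_one w i (j + d)
      have : j + (d+1) = (j + d) + 1 := by omega
      rw [this]
      omega

lemma fix_lt {m : ℕ} {u : Equiv.Perm (Fin n)}
    (hu : ∀ a : Fin n, m ≤ (a : ℕ) → u a = a) :
    ∀ a : Fin n, (a : ℕ) < m → ((u a : Fin n) : ℕ) < m := by
  intro a ha
  by_contra h
  push_neg at h
  have h2 : u (u a) = u a := hu (u a) h
  have h3 : u a = a := u.injective h2
  rw [h3] at h
  omega

def lb (m n i j : ℕ) : ℕ := (min (min i j) n - m) + (min i m + min j m - m)

lemma lb_le_fcnt {m : ℕ} (hmn : m ≤ n) {u : Equiv.Perm (Fin n)}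
    (hu : ∀ a : Fin n, m ≤ (a : ℕ) → u a = a) (i j : ℕ) :
    lb m n i j ≤ fcnt u i j := by
  rcases le_or_gt (min (min i j) n) m with hK | hK
  · -- first term is 0; bound second term
    have h1 : fcnt u i m = min i m := by
      have e1 : fcnt u i m = ∑ a : Fin n, if (a : ℕ) < min i m then (1:ℕ) else 0 := by
        apply Finset.sum_congr rfl
        intro a _
        have hlt := fix_lt hu a
        have hge : m ≤ (a:ℕ) → ((u a : Fin n):ℕ) = (a:ℕ) := fun h => by rw [hu a h]
        by_cases hc : (a:ℕ) < m
        · have := hlt hc; split_ifs <;> omega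
        · have := hge (by omega); split_ifs <;> omega
      rw [e1, cnt_lt]; omega
    have h2 : fcnt u i m ≤ fcnt u i (min j m) + (m - min j m) := by
      have := fcnt_add_right u i (min j m) (m - min j m)
      have e : min j m + (m - min j m) = m := by omega
      rw [e] at this; exact this
    have h3 : fcnt u i (min j m) ≤ fcnt u i j := fcnt_mono_right u i (by omega)
    simp only [lb]
    omega
  · -- all of [0, K) is counted
    set K := min (min i j) n with hKdef
    have h1 : (∑ a : Fin n, if (a : ℕ) < K then (1:ℕ) else 0) ≤ fcnt u i j := by
      apply Finset.sum_le_sum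
      intro a _
      by_cases hc : (a:ℕ) < K
      · have hcond : (a : ℕ) + 1 ≤ i ∧ ((u a : Fin n) : ℕ) + 1 ≤ j := by
          constructor
          · omega
          · by_cases hm : (a:ℕ) < m
            · have := fix_lt hu a hm; omega
            · have := hu a (by omega); rw [this]; omega
        rw [if_pos hc, if_pos hcond]
      · rw [if_neg hc]; omega
    rw [cnt_lt] at h1
    simp only [lb]
    omega

-- new material
lemma fcnt_le_left (w : Equiv.Perm (Fin n)) (i j : ℕ) : fcnt w i j ≤ i := by
  induction i with
  | zero => rw [fcnt_zero_left]
  | succ i ih =>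
      have := fcnt_succ_left w i j
      have := rowadd_le_one w i j
      omega

lemma fcnt_le_right (w : Equiv.Perm (Fin n)) (i j : ℕ) : fcnt w i j ≤ j := by
  induction j with
  | zero => rw [fcnt_zero_right]
  | succ j ih =>
      have := fcnt_succ_right w i j
      have := coladd_le_one w i j
      omega

lemma fcnt_supermod (w : Equiv.Perm (Fin n)) (i j : ℕ) :
    fcnt w (i+1) j + fcnt w i (j+1) ≤ fcnt w (i+1) (j+1) + fcnt w i j := by
  have h1 := fcnt_succ_left w i j
  have h2 := fcnt_succ_left w i (j+1)
  have h3 := rowadd_mono w i (show j ≤ j+1 by omega)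
  omega

def Rf (w : Equiv.Perm (Fin n)) (m i j : ℕ) : ℕ := max (fcnt w i j) (lb m n i j)


lemma R_zero_left {m : ℕ} (w : Equiv.Perm (Fin n)) (hmn : m ≤ n) (j : ℕ) : Rf w m 0 j = 0 := by
  have := fcnt_zero_left w j
  simp only [Rf, lb]
  omega

lemma R_zero_right {m : ℕ} (w : Equiv.Perm (Fin n)) (hmn : m ≤ n) (i : ℕ) : Rf w m i 0 = 0 := by
  have := fcnt_zero_right w i
  simp only [Rf, lb]
  omega

lemma R_big {m : ℕ} (w : Equiv.Perm (Fin n)) (hmn : m ≤ n) {i j : ℕ} (h : m ≤ i ∨ m ≤ j) :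
    Rf w m i j = min (min i j) n := by
  have h1 := fcnt_le_left w i j
  have h2 := fcnt_le_right w i j
  have h3 := fcnt_le_n w i j
  simp only [Rf, lb]
  omega

lemma R_top_right {m : ℕ} (w : Equiv.Perm (Fin n)) (hmn : m ≤ n) (i : ℕ) : Rf w m i n = min i n :=
  (R_big w hmn (Or.inr hmn)).trans (by omega)

lemma R_top_left {m : ℕ} (w : Equiv.Perm (Fin n)) (hmn : m ≤ n) (j : ℕ) : Rf w m n j = min j n :=
  (R_big w hmn (Or.inl hmn)).trans (by omega)

lemma R_succ_left_le {m : ℕ} (w : Equiv.Perm (Fin n)) (i j : ℕ) : Rf w m (i+1) j ≤ Rf w m i j + 1 := by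
  have h1 := fcnt_succ_left w i j
  have h2 := rowadd_le_one w i j
  simp only [Rf, lb]
  omega

lemma R_mono_left {m : ℕ} (w : Equiv.Perm (Fin n)) (i j : ℕ) : Rf w m i j ≤ Rf w m (i+1) j := by
  have h1 := fcnt_succ_left w i j
  simp only [Rf, lb]
  omega

lemma R_succ_right_le {m : ℕ} (w : Equiv.Perm (Fin n)) (i j : ℕ) : Rf w m i (j+1) ≤ Rf w m i j + 1 := by
  have h1 := fcnt_succ_right w i j
  have h2 := coladd_le_one w i j
  simp only [Rf, lb]
  omega

lemma R_mono_right {m : ℕ} (w : Equiv.Perm (Fin n)) (i j : ℕ) : Rf w m i j ≤ Rf w m i (j+1) := by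
  have h1 := fcnt_succ_right w i j
  simp only [Rf, lb]
  omega

lemma R_stab_left {m : ℕ} (w : Equiv.Perm (Fin n)) (hmn : m ≤ n) {i : ℕ} (j : ℕ) (h : n ≤ i) : Rf w m (i+1) j = Rf w m i j := by
  have h1 := fcnt_stab_left w j h
  simp only [Rf, lb]
  omega

lemma R_stab_right {m : ℕ} (w : Equiv.Perm (Fin n)) (hmn : m ≤ n) (i : ℕ) {j : ℕ} (h : n ≤ j) : Rf w m i (j+1) = Rf w m i j := by
  have h1 := fcnt_stab_right w i h
  simp only [Rf, lb]
  omega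

lemma R_supermod {m : ℕ} (w : Equiv.Perm (Fin n)) (hmn : m ≤ n) (i j : ℕ) :
    Rf w m (i+1) j + Rf w m i (j+1) ≤ Rf w m (i+1) (j+1) + Rf w m i j := by
  rcases le_or_gt m i with h | h
  · have r1 : Rf w m (i+1) j = min (min (i+1) j) n := R_big w hmn (Or.inl (by omega))
    have r2 : Rf w m i (j+1) = min (min i (j+1)) n := R_big w hmn (Or.inl h)
    have r3 : Rf w m (i+1) (j+1) = min (min (i+1) (j+1)) n := R_big w hmn (Or.inl (by omega))
    have r4 : Rf w m i j = min (min i j) n := R_big w hmn (Or.inl h)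
    rw [r1, r2, r3, r4]
    omega
  rcases le_or_gt m j with h' | h'
  · have r1 : Rf w m (i+1) j = min (min (i+1) j) n := R_big w hmn (Or.inr h')
    have r2 : Rf w m i (j+1) = min (min i (j+1)) n := R_big w hmn (Or.inr (by omega))
    have r3 : Rf w m (i+1) (j+1) = min (min (i+1) (j+1)) n := R_big w hmn (Or.inr (by omega))
    have r4 : Rf w m i j = min (min i j) n := R_big w hmn (Or.inr h')
    rw [r1, r2, r3, r4]
    omega
  · have hsm := fcnt_supermod w i j
    have hb1 := fcnt_succ_left w i j
    have hb2 := rowadd_le_one w i j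
    have hc1 := fcnt_succ_right w i j
    have hc2 := coladd_le_one w i j
    have hbd := fcnt_mono_right w (i+1) (show j ≤ j+1 by omega)
    have hcd := fcnt_mono_left w (j+1) (show i ≤ i+1 by omega)
    have e1 : lb m n (i+1) j = i + 1 + j - m := by simp only [lb]; omega
    have e2 : lb m n i (j+1) = i + (j+1) - m := by simp only [lb]; omega
    have e3 : lb m n (i+1) (j+1) = i + 1 + (j+1) - m := by simp only [lb]; omega
    have e4 : lb m n i j = i + j - m := by simp only [lb]; omega
    simp only [Rf, e1, e2, e3, e4]
    omega

-- new material
def Ent (w : Equiv.Perm (Fin n)) (m i j : ℕ) : ℕ :=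
  (Rf w m (i+1) (j+1) + Rf w m i j) - (Rf w m (i+1) j + Rf w m i (j+1))


lemma Ent_split {m : ℕ} (w : Equiv.Perm (Fin n)) (hmn : m ≤ n) (i j : ℕ) :
    Rf w m (i+1) (j+1) + Rf w m i j
      = Rf w m (i+1) j + Rf w m i (j+1) + Ent w m i j := by
  have := R_supermod w hmn i j
  simp only [Ent]
  omega

lemma Ent_le_one {m : ℕ} (w : Equiv.Perm (Fin n)) (hmn : m ≤ n) (i j : ℕ) : Ent w m i j ≤ 1 := by
  have h1 := Ent_split w hmn i j
  have h2 := R_succ_left_le (m := m) w i (j+1)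
  have h3 := R_mono_left (m := m) w i j
  omega

lemma Ent_zero_right {m : ℕ} (w : Equiv.Perm (Fin n)) (hmn : m ≤ n) (i : ℕ) {j : ℕ} (hj : n ≤ j) : Ent w m i j = 0 := by
  have h1 := R_stab_right w hmn (i+1) hj
  have h2 := R_stab_right w hmn i hj
  simp only [Ent]
  omega

lemma Ent_zero_left {m : ℕ} (w : Equiv.Perm (Fin n)) (hmn : m ≤ n) {i : ℕ} (j : ℕ) (hi : n ≤ i) : Ent w m i j = 0 := by
  have h1 := R_stab_left w hmn (j+1) hi
  have h2 := R_stab_left w hmn j hi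
  simp only [Ent]
  omega

lemma row_tel {m : ℕ} (w : Equiv.Perm (Fin n)) (hmn : m ≤ n) (i : ℕ) : ∀ j : ℕ,
    Rf w m (i+1) j = Rf w m i j + ∑ b ∈ Finset.range j, Ent w m i b := by
  intro j
  induction j with
  | zero =>
      rw [R_zero_right w hmn, R_zero_right w hmn]
      simp
  | succ j ih =>
      rw [Finset.sum_range_succ]
      have := Ent_split w hmn i j
      omega

lemma col_tel {m : ℕ} (w : Equiv.Perm (Fin n)) (hmn : m ≤ n) (j : ℕ) : ∀ i : ℕ,
    Rf w m i (j+1) = Rf w m i j + ∑ a ∈ Finset.range i, Ent w m a j := by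
  intro i
  induction i with
  | zero =>
      rw [R_zero_left w hmn, R_zero_left w hmn]
      simp
  | succ i ih =>
      rw [Finset.sum_range_succ]
      have := Ent_split w hmn i j
      omega

lemma row_sum_one {m : ℕ} (w : Equiv.Perm (Fin n)) (hmn : m ≤ n) {i : ℕ} (hi : i < n) :
    ∑ b ∈ Finset.range n, Ent w m i b = 1 := by
  have h1 := row_tel w hmn i n
  have h2 := R_top_right w hmn i
  have h3 := R_top_right w hmn (i+1)
  omega

lemma col_sum_one {m : ℕ} (w : Equiv.Perm (Fin n)) (hmn : m ≤ n) {j : ℕ} (hj : j < n) :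
    ∑ a ∈ Finset.range n, Ent w m a j = 1 := by
  have h1 := col_tel w hmn j n
  have h2 := R_top_left w hmn j
  have h3 := R_top_left w hmn (j+1)
  omega

lemma pair_le_sum {f : ℕ → ℕ} {b b' N : ℕ} (hb : b < N) (hb' : b' < N) (hne : b ≠ b') :
    f b + f b' ≤ ∑ x ∈ Finset.range N, f x := by
  have hsub : ({b, b'} : Finset ℕ) ⊆ Finset.range N := by
    intro x hx
    simp only [Finset.mem_insert, Finset.mem_singleton] at hx
    rcases hx with h | h <;> (subst h; simp [Finset.mem_range]; omega)
  calc f b + f b' = ∑ x ∈ ({b, b'} : Finset ℕ), f x := (Finset.sum_pair hne).symm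
    _ ≤ ∑ x ∈ Finset.range N, f x := Finset.sum_le_sum_of_subset hsub

lemma ent_unique_row {m : ℕ} (w : Equiv.Perm (Fin n)) (hmn : m ≤ n) {i b b' : ℕ} (hi : i < n) (hb : b < n) (hb' : b' < n)
    (h1 : Ent w m i b = 1) (h2 : Ent w m i b' = 1) : b = b' := by
  by_contra hne
  have hp := pair_le_sum (f := fun x => Ent w m i x) hb hb' hne
  rw [row_sum_one w hmn hi] at hp
  omega

lemma ent_unique_col {m : ℕ} (w : Equiv.Perm (Fin n)) (hmn : m ≤ n) {j a a' : ℕ} (hj : j < n) (ha : a < n) (ha' : a' < n)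
    (h1 : Ent w m a j = 1) (h2 : Ent w m a' j = 1) : a = a' := by
  by_contra hne
  have hp := pair_le_sum (f := fun x => Ent w m x j) ha ha' hne
  rw [col_sum_one w hmn hj] at hp
  omega

lemma ent_exists_row {m : ℕ} (w : Equiv.Perm (Fin n)) (hmn : m ≤ n) {i : ℕ} (hi : i < n) :
    ∃ b : ℕ, b < n ∧ Ent w m i b = 1 := by
  by_contra h
  push_neg at h
  have hz : ∑ b ∈ Finset.range n, Ent w m i b = 0 := by
    apply Finset.sum_eq_zero
    intro b hb
    have hb' := Finset.mem_range.mp hb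
    have := h b hb'
    have := Ent_le_one w hmn i b
    omega
  have := row_sum_one w hmn hi
  omega


lemma inner_sum (w : Equiv.Perm (Fin n)) (j : ℕ) (x : ℕ) (hx : x < n) :
    ∑ l ∈ Finset.Icc 1 j, entry1 (permMatrix w) (x+1) l
      = if ((w ⟨x, hx⟩ : Fin n) : ℕ) + 1 ≤ j then (1:ℤ) else 0 := by
  set c : ℕ := ((w ⟨x, hx⟩ : Fin n) : ℕ) + 1 with hc
  have hcn : 1 ≤ c ∧ c ≤ n := by
    constructor
    · omega
    · have := (w ⟨x, hx⟩).isLt; omega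
  have key : ∀ l ∈ Finset.Icc 1 j, entry1 (permMatrix w) (x+1) l
      = if l = c then (1:ℤ) else 0 := by
    intro l hl
    have hl1 : 1 ≤ l := (Finset.mem_Icc.mp hl).1
    rw [entry1]
    by_cases hln : l ≤ n
    · rw [dif_pos (by omega)]
      simp only [permMatrix, Matrix.of_apply]
      have hfin : (⟨x + 1 - 1, by omega⟩ : Fin n) = ⟨x, hx⟩ := by
        apply Fin.ext; simp
      rw [hfin]
      by_cases heq : w ⟨x, hx⟩ = (⟨l - 1, by omega⟩ : Fin n)
      · rw [if_pos heq, if_pos]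
        have := congrArg (fun t : Fin n => (t : ℕ)) heq
        simp at this
        omega
      · rw [if_neg heq, if_neg]
        intro hlc
        apply heq
        apply Fin.ext
        simp
        omega
    · rw [dif_neg (by omega), if_neg (by omega)]
  rw [Finset.sum_congr rfl key, Finset.sum_ite_eq' (Finset.Icc 1 j) c (fun _ => (1:ℤ))]
  simp only [Finset.mem_Icc]
  split_ifs <;> first | rfl | omega

lemma inner_sum_zero (w : Equiv.Perm (Fin n)) (j : ℕ) (k : ℕ) (hk : n < k) :
    ∑ l ∈ Finset.Icc 1 j, entry1 (permMatrix w) k l = 0 := by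
  apply Finset.sum_eq_zero
  intro l _
  rw [entry1, dif_neg (by omega)]

lemma cornerSum_eq_fcnt (w : Equiv.Perm (Fin n)) (i j : ℕ) :
    cornerSum (permMatrix w) i j = (fcnt w i j : ℤ) := by
  classical
  set G : ℕ → ℤ := fun x =>
    if hx : x < n then (if ((w ⟨x, hx⟩ : Fin n) : ℕ) + 1 ≤ j then (1:ℤ) else 0) else 0 with hG
  have step1 : cornerSum (permMatrix w) i j = ∑ x ∈ Finset.range i, G x := by
    rw [cornerSum]
    refine Finset.sum_nbij' (fun k => k - 1) (fun x => x + 1) ?_ ?_ ?_ ?_ ?_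
    · intro k hk; simp only [Finset.mem_Icc] at hk; simp only [Finset.mem_range]; omega
    · intro x hxr; simp only [Finset.mem_range] at hxr; simp only [Finset.mem_Icc]; omega
    · intro k hk; simp only [Finset.mem_Icc] at hk; show k - 1 + 1 = k; omega
    · intro x _; show x + 1 - 1 = x; omega
    · intro k hk
      simp only [Finset.mem_Icc] at hk
      obtain ⟨x, rfl⟩ : ∃ x, k = x + 1 := ⟨k - 1, by omega⟩
      simp only [Nat.add_sub_cancel]
      by_cases hkn : x < n
      · rw [inner_sum w j x hkn, hG]
        simp only []
        rw [dif_pos hkn]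
      · rw [inner_sum_zero w j (x+1) (by omega), hG]
        simp only []
        rw [dif_neg hkn]
  have step2 : ∑ x ∈ Finset.range i, G x = ∑ x ∈ Finset.range (min i n), G x := by
    symm
    apply Finset.sum_subset
    · intro x hx; simp only [Finset.mem_range] at *; omega
    · intro x hx hnx
      simp only [Finset.mem_range] at hx hnx
      rw [hG]
      simp only []
      rw [dif_neg (by omega)]
  set H : ℕ → ℤ := fun x => if x + 1 ≤ i then G x else 0 with hH
  have step3 : (fcnt w i j : ℤ) = ∑ x ∈ Finset.range n, H x := by
    have e1 : (fcnt w i j : ℤ)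
        = ∑ a : Fin n, (if (a : ℕ) + 1 ≤ i ∧ ((w a : Fin n) : ℕ) + 1 ≤ j then (1:ℤ) else 0) := by
      rw [fcnt]
      push_cast
      rfl
    have e2 : ∀ a : Fin n,
        (if (a : ℕ) + 1 ≤ i ∧ ((w a : Fin n) : ℕ) + 1 ≤ j then (1:ℤ) else 0) = H (a : ℕ) := by
      intro a
      rw [hH, hG]
      simp only [a.isLt, dite_true, dif_pos a.isLt, Fin.eta]
      split_ifs <;> first | rfl | omega
    rw [e1, Finset.sum_congr rfl (fun a _ => e2 a)]
    exact Fin.sum_univ_eq_sum_range H n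
  have step4 : ∑ x ∈ Finset.range n, H x = ∑ x ∈ Finset.range (min i n), G x := by
    have sub : Finset.range (min i n) ⊆ Finset.range n := by
      intro x hx; simp only [Finset.mem_range] at *; omega
    rw [← Finset.sum_subset sub (fun x hx hnx => by
      simp only [Finset.mem_range] at hx hnx
      rw [hH]; simp only []
      rw [if_neg (by omega)])]
    apply Finset.sum_congr rfl
    intro x hx
    simp only [Finset.mem_range] at hx
    rw [hH]
    simp only []
    rw [if_pos (by omega)]
  rw [step1, step2, step3, step4]

lemma Rf_def {m : ℕ} (w : Equiv.Perm (Fin n)) (i j : ℕ) :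
    Rf w m i j = max (fcnt w i j) (lb m n i j) := rfl

lemma Ent_def {m : ℕ} (w : Equiv.Perm (Fin n)) (i j : ℕ) :
    Ent w m i j = (Rf w m (i+1) (j+1) + Rf w m i j) - (Rf w m (i+1) j + Rf w m i (j+1)) := rfl

lemma rowadd_def (w : Equiv.Perm (Fin n)) (i j : ℕ) :
    rowadd w i j = if h : i < n then (if ((w ⟨i, h⟩ : Fin n) : ℕ) + 1 ≤ j then 1 else 0) else 0 := rfl

end Stmt13Aux

open Stmt13Aux in
/-- Let `m ≤ n` and regard `S_m ⊆ S_n` (permutations fixing all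
points of `{m+1,...,n}`).  If `w ∈ S_n` is an upper bound in Bruhat order to
`w_1, ..., w_k ∈ S_m`, then there exists `w' ∈ S_n` fixing all points greater
than `m` (i.e. `w' ∈ S_m`) with `w_t ≤ w' ≤ w` in Bruhat order for all `t`.
(Bruhat order: `u ≤ v` iff `r_u ≥ r_v` entrywise on corner sums; positions are
1-based, so a 0-based index `a` corresponds to the point `a + 1`.) -/
theorem stmt13 {n m k : ℕ} (hmn : m ≤ n)
    (w : Equiv.Perm (Fin n)) (ws : Fin k → Equiv.Perm (Fin n))
    (hws : ∀ t : Fin k, ∀ a : Fin n, m ≤ (a : ℕ) → ws t a = a)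
    (hub : ∀ t : Fin k, ∀ a b : ℕ,
      cornerSum (permMatrix w) a b ≤ cornerSum (permMatrix (ws t)) a b) :
    ∃ w' : Equiv.Perm (Fin n),
      (∀ a : Fin n, m ≤ (a : ℕ) → w' a = a) ∧
      (∀ t : Fin k, ∀ a b : ℕ,
        cornerSum (permMatrix w') a b ≤ cornerSum (permMatrix (ws t)) a b) ∧
      (∀ a b : ℕ,
        cornerSum (permMatrix w) a b ≤ cornerSum (permMatrix w') a b) := by
  classical
  have hubN : ∀ (t : Fin k) (i j : ℕ), fcnt w i j ≤ fcnt (ws t) i j := by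
    intro t i j
    have h := hub t i j
    rw [cornerSum_eq_fcnt, cornerSum_eq_fcnt] at h
    exact_mod_cast h
  have hex : ∀ a : Fin n, ∃ b : Fin n, Ent w m (a : ℕ) (b : ℕ) = 1 := by
    intro a
    obtain ⟨b, hb, h1⟩ := ent_exists_row w hmn a.isLt
    exact ⟨⟨b, hb⟩, h1⟩
  choose σ hσ using hex
  have hinj : Function.Injective σ := by
    intro a a' hEq
    have h1 := hσ a
    have h2 := hσ a'
    rw [hEq] at h1
    exact Fin.ext (ent_unique_col w hmn (σ a').isLt a.isLt a'.isLt h1 h2)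
  let w' : Equiv.Perm (Fin n) := Equiv.ofBijective σ (Finite.injective_iff_bijective.mp hinj)
  have hw'app : ∀ a, w' a = σ a := fun a => rfl
  have hchar : ∀ (a : Fin n) (b : ℕ), b < n →
      Ent w m (a : ℕ) b = if ((σ a : ℕ) = b) then 1 else 0 := by
    intro a b hb
    by_cases h : (σ a : ℕ) = b
    · rw [if_pos h, ← h]
      exact hσ a
    · rw [if_neg h]
      by_contra hne
      have hle := Ent_le_one w hmn (a : ℕ) b
      have h1 : Ent w m (a : ℕ) b = 1 := by omega
      exact h (ent_unique_row w hmn a.isLt (σ a).isLt hb (hσ a) h1)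
  have hrowadd : ∀ i j : ℕ, rowadd w' i j = ∑ b ∈ Finset.range j, Ent w m i b := by
    intro i j
    by_cases hi : i < n
    · have hsub : Finset.range (min j n) ⊆ Finset.range j := by
        intro b hb; simp only [Finset.mem_range] at *; omega
      have hz : ∀ b ∈ Finset.range j, b ∉ Finset.range (min j n) → Ent w m i b = 0 := by
        intro b hb hnb
        simp only [Finset.mem_range] at hb hnb
        exact Ent_zero_right w hmn i (by omega)
      rw [← Finset.sum_subset hsub hz]
      have hcongr : ∀ b ∈ Finset.range (min j n),
          Ent w m i b = if b = ((σ ⟨i, hi⟩ : Fin n) : ℕ) then 1 else 0 := by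
        intro b hb
        simp only [Finset.mem_range] at hb
        rw [hchar ⟨i, hi⟩ b (by omega)]
        by_cases h : ((σ ⟨i, hi⟩ : Fin n) : ℕ) = b
        · rw [if_pos h, if_pos h.symm]
        · rw [if_neg h, if_neg (fun hc => h hc.symm)]
      rw [Finset.sum_congr rfl hcongr,
        Finset.sum_ite_eq' (Finset.range (min j n)) _ (fun _ => (1:ℕ))]
      rw [rowadd_def, dif_pos hi]
      have hww : ((w' ⟨i, hi⟩ : Fin n) : ℕ) = ((σ ⟨i, hi⟩ : Fin n) : ℕ) := rfl
      rw [hww]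
      simp only [Finset.mem_range]
      have hlt := (σ ⟨i, hi⟩).isLt
      split_ifs <;> omega
    · rw [rowadd_def, dif_neg hi]
      symm
      apply Finset.sum_eq_zero
      intro b _
      exact Ent_zero_left w hmn b (by omega)
  have hfR : ∀ i j : ℕ, fcnt w' i j = Rf w m i j := by
    intro i j
    induction i with
    | zero => rw [fcnt_zero_left, R_zero_left w hmn]
    | succ i ih =>
        rw [fcnt_succ_left, ih, hrowadd]
        exact (row_tel w hmn i j).symm
  have hfix : ∀ a : Fin n, m ≤ (a : ℕ) → w' a = a := by
    intro a ha
    have hlt := a.isLt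
    have hEnt : Ent w m (a : ℕ) (a : ℕ) = 1 := by
      have r1 : Rf w m ((a:ℕ)+1) ((a:ℕ)+1) = min (min ((a:ℕ)+1) ((a:ℕ)+1)) n :=
        R_big w hmn (Or.inl (by omega))
      have r2 : Rf w m (a:ℕ) (a:ℕ) = min (min (a:ℕ) (a:ℕ)) n := R_big w hmn (Or.inl ha)
      have r3 : Rf w m ((a:ℕ)+1) (a:ℕ) = min (min ((a:ℕ)+1) (a:ℕ)) n :=
        R_big w hmn (Or.inl (by omega))
      have r4 : Rf w m (a:ℕ) ((a:ℕ)+1) = min (min (a:ℕ) ((a:ℕ)+1)) n := R_big w hmn (Or.inl ha)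
      rw [Ent_def, r1, r2, r3, r4]
      omega
    have hc := hchar a (a : ℕ) a.isLt
    rw [hEnt] at hc
    have hσa : (σ a : ℕ) = (a : ℕ) := by
      by_contra hcc
      rw [if_neg hcc] at hc
      omega
    rw [hw'app]
    exact Fin.ext hσa
  refine ⟨w', hfix, ?_, ?_⟩
  · intro t i j
    rw [cornerSum_eq_fcnt, cornerSum_eq_fcnt]
    have h1 := hubN t i j
    have h2 := lb_le_fcnt hmn (fun a ha => hws t a ha) i j
    have h3 := hfR i j
    have h4 := Rf_def (m := m) w i j
    have hle : fcnt w' i j ≤ fcnt (ws t) i j := by omega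
    exact_mod_cast hle
  · intro i j
    rw [cornerSum_eq_fcnt, cornerSum_eq_fcnt]
    have h3 := hfR i j
    have h4 := Rf_def (m := m) w i j
    have hle : fcnt w i j ≤ fcnt w' i j := by omega
    exact_mod_cast hle
end

section
/- Let A ∈ ASM(n) and let w be an n×n partial permutation matrix with w ≥ A, i.e. r_w(i,j) ≤ r_A(i,j) for all 1 ≤ i,j ≤ n. Then there exists an honest permutation w' ∈ S_n with A ≤ w' ≤ w, i.e. r_w(i,j) ≤ r_{w'}(i,j) ≤ r_A(i,j) for all 1 ≤ i,j ≤ n. Consequently, the minimal elements of the set of partial permutation matrices lying above A are honest permutation matrices. -/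
/-- A partial permutation matrix: a 0-1 matrix with at most one `1` in each
row and each column. -/
def IsPartialPermMatrix {n : ℕ} (w : Matrix (Fin n) (Fin n) ℤ) : Prop :=
  (∀ a b : Fin n, w a b = 0 ∨ w a b = 1) ∧
  (∀ a : Fin n, (∑ b : Fin n, w a b) ≤ 1) ∧
  (∀ b : Fin n, (∑ a : Fin n, w a b) ≤ 1)


section Helpers

variable {n : ℕ}

lemma cornerSum_zero_row (M : Matrix (Fin n) (Fin n) ℤ) (j : ℕ) : cornerSum M 0 j = 0 := by
  simp [cornerSum]

lemma cornerSum_zero_col (M : Matrix (Fin n) (Fin n) ℤ) (i : ℕ) : cornerSum M i 0 = 0 := by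
  simp [cornerSum]

lemma rowPartial_zero (M : Matrix (Fin n) (Fin n) ℤ) (i : ℕ) : rowPartial M i 0 = 0 := by
  simp [rowPartial]

lemma rowPartial_succ (M : Matrix (Fin n) (Fin n) ℤ) (i j : ℕ) :
    rowPartial M i (j+1) = rowPartial M i j + entry1 M i (j+1) := by
  unfold rowPartial
  exact Finset.sum_Icc_succ_top (by omega) _

lemma colPartial_zero (M : Matrix (Fin n) (Fin n) ℤ) (j : ℕ) : colPartial M 0 j = 0 := by
  simp [colPartial]

lemma colPartial_succ (M : Matrix (Fin n) (Fin n) ℤ) (i j : ℕ) :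
    colPartial M (i+1) j = colPartial M i j + entry1 M (i+1) j := by
  unfold colPartial
  exact Finset.sum_Icc_succ_top (by omega) _

lemma cornerSum_succ_row (M : Matrix (Fin n) (Fin n) ℤ) (i j : ℕ) :
    cornerSum M (i+1) j = cornerSum M i j + rowPartial M (i+1) j := by
  unfold cornerSum rowPartial
  exact Finset.sum_Icc_succ_top (by omega) _

lemma cornerSum_succ_col (M : Matrix (Fin n) (Fin n) ℤ) (i j : ℕ) :
    cornerSum M i (j+1) = cornerSum M i j + colPartial M i (j+1) := by
  unfold cornerSum colPartial
  rw [← Finset.sum_add_distrib]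
  exact Finset.sum_congr rfl fun k _ => Finset.sum_Icc_succ_top (by omega) _

/-- generic: monotone from nonneg steps -/
lemma mono_of_steps {F s : ℕ → ℤ} (hF : ∀ t, F (t+1) = F t + s (t+1))
    (h0 : ∀ t, 0 ≤ s t) : ∀ {a b : ℕ}, a ≤ b → F a ≤ F b := by
  intro a b hab
  induction b, hab using Nat.le_induction with
  | base => exact le_refl _
  | succ b hab ih => rw [hF b]; have := h0 (b+1); omega

/-- generic: Lipschitz from steps ≤ 1 -/
lemma lip_of_steps {F s : ℕ → ℤ} (hF : ∀ t, F (t+1) = F t + s (t+1))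
    (h1 : ∀ t, s t ≤ 1) : ∀ {a b : ℕ}, a ≤ b → F b ≤ F a + ((b : ℤ) - a) := by
  intro a b hab
  induction b, hab using Nat.le_induction with
  | base => simp
  | succ b hab ih => rw [hF b]; have := h1 (b+1); push_cast; push_cast at ih; omega

end Helpers
section MatrixBounds

variable {n : ℕ}

lemma entry1_eq_zero_of_out {M : Matrix (Fin n) (Fin n) ℤ} {i j : ℕ}
    (h : ¬(1 ≤ i ∧ i ≤ n ∧ 1 ≤ j ∧ j ≤ n)) : entry1 M i j = 0 := by
  unfold entry1; rw [dif_neg h]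

lemma entry1_w_nonneg {w : Matrix (Fin n) (Fin n) ℤ} (hw : IsPartialPermMatrix w)
    (i j : ℕ) : 0 ≤ entry1 w i j := by
  unfold entry1
  split
  · rcases hw.1 _ _ with h | h <;> rw [h] <;> norm_num
  · exact le_refl 0

lemma rowPartial_w_nonneg {w : Matrix (Fin n) (Fin n) ℤ} (hw : IsPartialPermMatrix w)
    (i j : ℕ) : 0 ≤ rowPartial w i j :=
  Finset.sum_nonneg fun l _ => entry1_w_nonneg hw i l

lemma colPartial_w_nonneg {w : Matrix (Fin n) (Fin n) ℤ} (hw : IsPartialPermMatrix w)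
    (i j : ℕ) : 0 ≤ colPartial w i j :=
  Finset.sum_nonneg fun k _ => entry1_w_nonneg hw k j

lemma sum_Icc_one_eq_sum_fin (F : ℕ → ℤ) :
    ∑ l ∈ Finset.Icc 1 n, F l = ∑ b : Fin n, F ((b : ℕ) + 1) := by
  rw [Fin.sum_univ_eq_sum_range (fun t => F (t+1)) n]
  apply Finset.sum_nbij' (fun l => l - 1) (fun t => t + 1) <;> intros <;>
    simp_all [Finset.mem_Icc, Finset.mem_range] <;> omega

lemma rowPartial_w_full {w : Matrix (Fin n) (Fin n) ℤ} (hw : IsPartialPermMatrix w)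
    {i : ℕ} (h1 : 1 ≤ i) (h2 : i ≤ n) : rowPartial w i n ≤ 1 := by
  unfold rowPartial
  rw [sum_Icc_one_eq_sum_fin]
  have : ∀ b : Fin n, entry1 w i ((b : ℕ) + 1) = w ⟨i - 1, by omega⟩ b := by
    intro b
    unfold entry1
    rw [dif_pos ⟨h1, h2, by omega, by omega⟩]
    congr 1
  rw [Finset.sum_congr rfl fun b _ => this b]
  exact hw.2.1 _

lemma colPartial_w_full {w : Matrix (Fin n) (Fin n) ℤ} (hw : IsPartialPermMatrix w)
    {j : ℕ} (h1 : 1 ≤ j) (h2 : j ≤ n) : colPartial w n j ≤ 1 := by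
  unfold colPartial
  rw [sum_Icc_one_eq_sum_fin]
  have : ∀ b : Fin n, entry1 w ((b : ℕ) + 1) j = w b ⟨j - 1, by omega⟩ := by
    intro b
    unfold entry1
    rw [dif_pos ⟨by omega, by omega, h1, h2⟩]
    congr 1
  rw [Finset.sum_congr rfl fun b _ => this b]
  exact hw.2.2 _

lemma rowPartial_w_le_one {w : Matrix (Fin n) (Fin n) ℤ} (hw : IsPartialPermMatrix w)
    (i j : ℕ) : rowPartial w i j ≤ 1 := by
  by_cases hi : 1 ≤ i ∧ i ≤ n
  · have hmono : rowPartial w i j ≤ rowPartial w i (max j n) := by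
      exact mono_of_steps (F := fun t => rowPartial w i t) (s := fun t => entry1 w i t)
        (rowPartial_succ w i) (entry1_w_nonneg hw i) (le_max_left _ _)
    have hstab : rowPartial w i (max j n) = rowPartial w i n := by
      have : ∀ m, n ≤ m → rowPartial w i m = rowPartial w i n := by
        intro m hm
        induction m, hm using Nat.le_induction with
        | base => rfl
        | succ m hm ih =>
            rw [rowPartial_succ, ih, entry1_eq_zero_of_out (by omega), add_zero]
      exact this _ (le_max_right _ _)
    calc rowPartial w i j ≤ rowPartial w i (max j n) := hmono
      _ = rowPartial w i n := hstab
      _ ≤ 1 := rowPartial_w_full hw hi.1 hi.2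
  · have : rowPartial w i j = 0 := by
      apply Finset.sum_eq_zero
      intro l _
      exact entry1_eq_zero_of_out (by omega)
    omega

lemma colPartial_w_le_one {w : Matrix (Fin n) (Fin n) ℤ} (hw : IsPartialPermMatrix w)
    (i j : ℕ) : colPartial w i j ≤ 1 := by
  by_cases hj : 1 ≤ j ∧ j ≤ n
  · have hmono : colPartial w i j ≤ colPartial w (max i n) j := by
      exact mono_of_steps (F := fun t => colPartial w t j) (s := fun t => entry1 w t j)
        (fun t => colPartial_succ w t j) (fun t => entry1_w_nonneg hw t j) (le_max_left _ _)
    have hstab : colPartial w (max i n) j = colPartial w n j := by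
      have : ∀ m, n ≤ m → colPartial w m j = colPartial w n j := by
        intro m hm
        induction m, hm using Nat.le_induction with
        | base => rfl
        | succ m hm ih =>
            rw [colPartial_succ, ih, entry1_eq_zero_of_out (by omega), add_zero]
      exact this _ (le_max_right _ _)
    calc colPartial w i j ≤ colPartial w (max i n) j := hmono
      _ = colPartial w n j := hstab
      _ ≤ 1 := colPartial_w_full hw hj.1 hj.2
  · have : colPartial w i j = 0 := by
      apply Finset.sum_eq_zero
      intro l _
      exact entry1_eq_zero_of_out (by omega)
    omega

end MatrixBounds
section FG

variable {n : ℕ}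

lemma f_col_mono {w : Matrix (Fin n) (Fin n) ℤ} (hw : IsPartialPermMatrix w)
    (i : ℕ) {j j' : ℕ} (h : j ≤ j') : cornerSum w i j ≤ cornerSum w i j' :=
  mono_of_steps (F := fun t => cornerSum w i t) (s := fun t => colPartial w i t)
    (cornerSum_succ_col w i) (colPartial_w_nonneg hw i) h

lemma f_col_lip {w : Matrix (Fin n) (Fin n) ℤ} (hw : IsPartialPermMatrix w)
    (i : ℕ) {j j' : ℕ} (h : j ≤ j') : cornerSum w i j' ≤ cornerSum w i j + ((j' : ℤ) - j) :=
  lip_of_steps (F := fun t => cornerSum w i t) (s := fun t => colPartial w i t)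
    (cornerSum_succ_col w i) (colPartial_w_le_one hw i) h

lemma f_row_lip {w : Matrix (Fin n) (Fin n) ℤ} (hw : IsPartialPermMatrix w)
    (j : ℕ) {i i' : ℕ} (h : i ≤ i') : cornerSum w i' j ≤ cornerSum w i j + ((i' : ℤ) - i) :=
  lip_of_steps (F := fun t => cornerSum w t j) (s := fun t => rowPartial w t j)
    (fun t => cornerSum_succ_row w t j) (fun t => rowPartial_w_le_one hw t j) h

lemma f_le_col {w : Matrix (Fin n) (Fin n) ℤ} (hw : IsPartialPermMatrix w)
    (i j : ℕ) : cornerSum w i j ≤ (j : ℤ) := by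
  have := f_col_lip hw i (Nat.zero_le j)
  rw [cornerSum_zero_col] at this
  simpa using this

lemma f_monodiff {w : Matrix (Fin n) (Fin n) ℤ} (hw : IsPartialPermMatrix w)
    {i i' j j' : ℕ} (hi : i ≤ i') (hj : j ≤ j') :
    cornerSum w i' j - cornerSum w i j ≤ cornerSum w i' j' - cornerSum w i j' := by
  induction i', hi using Nat.le_induction with
  | base => omega
  | succ m hm ih =>
      rw [cornerSum_succ_row, cornerSum_succ_row]
      have : rowPartial w (m+1) j ≤ rowPartial w (m+1) j' :=
        mono_of_steps (F := fun t => rowPartial w (m+1) t) (s := fun t => entry1 w (m+1) t)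
          (rowPartial_succ w (m+1)) (entry1_w_nonneg hw (m+1)) hj
      omega

variable {A : Matrix (Fin n) (Fin n) ℤ}

lemma g_row_mono (hA : IsASM A) (j : ℕ) {i i' : ℕ} (h : i ≤ i') :
    cornerSum A i j ≤ cornerSum A i' j :=
  mono_of_steps (F := fun t => cornerSum A t j) (s := fun t => rowPartial A t j)
    (fun t => cornerSum_succ_row A t j)
    (fun t => by rcases hA.1 t j with h' | h' <;> omega) h

lemma g_row_lip (hA : IsASM A) (j : ℕ) {i i' : ℕ} (h : i ≤ i') :
    cornerSum A i' j ≤ cornerSum A i j + ((i' : ℤ) - i) :=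
  lip_of_steps (F := fun t => cornerSum A t j) (s := fun t => rowPartial A t j)
    (fun t => cornerSum_succ_row A t j)
    (fun t => by rcases hA.1 t j with h' | h' <;> omega) h

lemma g_col_lip (hA : IsASM A) (i : ℕ) {j j' : ℕ} (h : j ≤ j') :
    cornerSum A i j' ≤ cornerSum A i j + ((j' : ℤ) - j) :=
  lip_of_steps (F := fun t => cornerSum A i t) (s := fun t => colPartial A i t)
    (cornerSum_succ_col A i)
    (fun t => by rcases hA.2.1 i t with h' | h' <;> omega) h

lemma g_le_col (hA : IsASM A) (i j : ℕ) : cornerSum A i j ≤ (j : ℤ) := by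
  have := g_col_lip hA i (Nat.zero_le j)
  rw [cornerSum_zero_col] at this
  simpa using this

lemma g_nonneg (hA : IsASM A) (i j : ℕ) : 0 ≤ cornerSum A i j := by
  have := g_row_mono hA j (Nat.zero_le i)
  rwa [cornerSum_zero_row] at this

lemma g_row_full (hA : IsASM A) {i : ℕ} (h : i ≤ n) : cornerSum A i n = (i : ℤ) := by
  induction i with
  | zero => simpa using cornerSum_zero_row A n
  | succ m ih =>
      rw [cornerSum_succ_row, ih (by omega), hA.2.2.1 (m+1) (by omega) h]
      push_cast; ring

lemma g_col_full (hA : IsASM A) {j : ℕ} (h : j ≤ n) : cornerSum A n j = (j : ℤ) := by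
  induction j with
  | zero => simpa using cornerSum_zero_col A n
  | succ m ih =>
      rw [cornerSum_succ_col, ih (by omega), hA.2.2.2 (m+1) (by omega) h]
      push_cast; ring

lemma g_lower (hA : IsASM A) {m j : ℕ} (hm : m ≤ n) (hj : j ≤ n) :
    (j : ℤ) - ((n : ℤ) - m) ≤ cornerSum A m j := by
  have h1 := g_row_lip hA j hm
  rw [g_col_full hA hj] at h1
  omega

lemma f_le_g {w : Matrix (Fin n) (Fin n) ℤ} (hA : IsASM A)
    (h : ∀ i j : ℕ, 1 ≤ i → i ≤ n → 1 ≤ j → j ≤ n →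
      cornerSum w i j ≤ cornerSum A i j)
    {m j : ℕ} (hm : m ≤ n) (hj : j ≤ n) : cornerSum w m j ≤ cornerSum A m j := by
  rcases Nat.eq_zero_or_pos m with hm0 | hm1
  · subst hm0; rw [cornerSum_zero_row]; exact g_nonneg hA 0 j
  rcases Nat.eq_zero_or_pos j with hj0 | hj1
  · subst hj0; rw [cornerSum_zero_col, cornerSum_zero_col]
  exact h m j hm1 hm hj1 hj

end FG
section Construction

open Classical in
/-- number of elements of `[1,j]` NOT in `U`, as an integer -/
noncomputable def rOf (U : Finset ℕ) (j : ℕ) : ℤ :=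
  ∑ t ∈ Finset.Icc 1 j, if t ∈ U then 0 else 1

open Classical in
/-- greedy choice: largest available column `u` such that all partial lower
bounds to its left are already satisfied -/
noncomputable def pickc {n : ℕ} (w : Matrix (Fin n) (Fin n) ℤ) (k : ℕ) (U : Finset ℕ) : ℕ :=
  if hS : (U.filter (fun u => ∀ t, t < u → cornerSum w (k+1) t ≤ rOf U t)).Nonempty
  then (U.filter (fun u => ∀ t, t < u → cornerSum w (k+1) t ≤ rOf U t)).max' hS else 0

/-- the set of still-unused columns after `k` greedy steps -/
noncomputable def Uset {n : ℕ} (w : Matrix (Fin n) (Fin n) ℤ) : ℕ → Finset ℕ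
  | 0 => Finset.Icc 1 n
  | (k+1) => (Uset w k).erase (pickc w k (Uset w k))

lemma rOf_zero (U : Finset ℕ) : rOf U 0 = 0 := by simp [rOf]

lemma rOf_succ (U : Finset ℕ) (j : ℕ) :
    rOf U (j+1) = rOf U j + (if (j+1) ∈ U then 0 else 1) := by
  unfold rOf
  rw [Finset.sum_Icc_succ_top (by omega)]

lemma rOf_nonneg (U : Finset ℕ) (j : ℕ) : 0 ≤ rOf U j :=
  Finset.sum_nonneg fun t _ => by split <;> norm_num

lemma rOf_mono (U : Finset ℕ) {j j' : ℕ} (h : j ≤ j') : rOf U j ≤ rOf U j' :=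
  mono_of_steps (F := rOf U) (s := fun t => if t ∈ U then 0 else 1)
    (rOf_succ U) (fun t => by split <;> norm_num) h

lemma rOf_lip (U : Finset ℕ) {j j' : ℕ} (h : j ≤ j') : rOf U j' ≤ rOf U j + ((j' : ℤ) - j) :=
  lip_of_steps (F := rOf U) (s := fun t => if t ∈ U then 0 else 1)
    (rOf_succ U) (fun t => by split <;> norm_num) h

/-- below the minimum of `U`, everything is used -/
lemma rOf_eq_self (U : Finset ℕ) {t : ℕ} (h : ∀ x ∈ U, t < x) : rOf U t = t := by
  unfold rOf
  rw [Finset.sum_congr rfl (fun x hx => by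
    rw [if_neg (fun hxU => by have := h x hxU; simp at hx; omega)])]
  simp

/-- an interval containing no element of `U` -/
lemma rOf_interval (U : Finset ℕ) {p q : ℕ} (hpq : p ≤ q)
    (h : ∀ x ∈ U, ¬(p < x ∧ x ≤ q)) : rOf U q = rOf U p + ((q : ℤ) - p) := by
  induction q, hpq using Nat.le_induction with
  | base => simp
  | succ q hq ih =>
      rw [rOf_succ, ih (fun x hx => fun hc => h x hx ⟨hc.1, by omega⟩),
        if_neg (fun hU => h _ hU ⟨by omega, by omega⟩)]
      push_cast; ring

lemma rOf_of_subset {U : Finset ℕ} {p : ℕ} (h : U ⊆ Finset.Icc 1 p) :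
    rOf U p = (p : ℤ) - U.card := by
  unfold rOf
  have h1 : ∀ t ∈ Finset.Icc 1 p, ((if t ∈ U then 0 else 1 : ℤ)) = 1 - (if t ∈ U then 1 else 0) := by
    intro t _; split <;> norm_num
  rw [Finset.sum_congr rfl h1, Finset.sum_sub_distrib]
  have h2 : ∑ t ∈ Finset.Icc 1 p, (if t ∈ U then (1:ℤ) else 0) = U.card := by
    rw [Finset.sum_ite_mem]
    rw [Finset.inter_eq_right.mpr h]
    simp
  rw [h2]
  simp [mul_comm]

lemma rOf_erase {U : Finset ℕ} {x : ℕ} (hx : x ∈ U) (hx1 : 1 ≤ x) (j : ℕ) :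
    rOf (U.erase x) j = rOf U j + (if x ≤ j then 1 else 0) := by
  unfold rOf
  have h1 : ∀ t ∈ Finset.Icc 1 j,
      ((if t ∈ U.erase x then 0 else 1 : ℤ)) =
        (if t ∈ U then 0 else 1) + (if t = x then 1 else 0) := by
    intro t _
    by_cases htx : t = x
    · subst htx
      simp [Finset.notMem_erase, hx]
    · by_cases htU : t ∈ U <;> simp [Finset.mem_erase, htx, htU]
  rw [Finset.sum_congr rfl h1, Finset.sum_add_distrib, Finset.sum_ite_eq' (Finset.Icc 1 j) x]
  congr 1
  by_cases hxj : x ≤ j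
  · rw [if_pos (Finset.mem_Icc.mpr ⟨hx1, hxj⟩), if_pos hxj]
  · rw [if_neg (fun hc => hxj (Finset.mem_Icc.mp hc).2), if_neg hxj]

end Construction
section Spec

variable {n : ℕ}

lemma pickc_spec {w : Matrix (Fin n) (Fin n) ℤ} (hw : IsPartialPermMatrix w) {k : ℕ}
    (hk : k < n) (hcard : (Uset w k).card = n - k) :
    pickc w k (Uset w k) ∈ Uset w k ∧
    (∀ t, t < pickc w k (Uset w k) → cornerSum w (k+1) t ≤ rOf (Uset w k) t) ∧
    ∀ x ∈ Uset w k, (∀ t, t < x → cornerSum w (k+1) t ≤ rOf (Uset w k) t) →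
      x ≤ pickc w k (Uset w k) := by
  classical
  have hUne : (Uset w k).Nonempty := by
    rw [← Finset.card_pos, hcard]; omega
  unfold pickc
  split
  case isTrue hS =>
    have hmem := Finset.max'_mem _ hS
    rw [Finset.mem_filter] at hmem
    exact ⟨hmem.1, hmem.2, fun x hx hLx => Finset.le_max' _ x (Finset.mem_filter.mpr ⟨hx, hLx⟩)⟩
  case isFalse hS =>
    exfalso
    apply hS
    refine ⟨(Uset w k).min' hUne, Finset.mem_filter.mpr ⟨Finset.min'_mem _ _, fun t ht => ?_⟩⟩
    rw [rOf_eq_self (Uset w k) (fun x hx => lt_of_lt_of_le ht (Finset.min'_le _ x hx))]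
    exact f_le_col hw (k+1) t

/-- the main invariant -/
def INV {n : ℕ} (A w : Matrix (Fin n) (Fin n) ℤ) (k : ℕ) : Prop :=
  ∀ m j j', k ≤ m → m ≤ n → j ≤ j' → j' ≤ n →
    cornerSum w m j + rOf (Uset w k) j' ≤ cornerSum A m j' + rOf (Uset w k) j

lemma rOf_Icc_zero {j : ℕ} (hj : j ≤ n) : rOf (Finset.Icc 1 n) j = 0 := by
  unfold rOf
  apply Finset.sum_eq_zero
  intro t ht
  rw [Finset.mem_Icc] at ht
  rw [if_pos (Finset.mem_Icc.mpr ⟨ht.1, le_trans ht.2 hj⟩)]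

lemma bundle {A w : Matrix (Fin n) (Fin n) ℤ} (hA : IsASM A) (hw : IsPartialPermMatrix w)
    (h : ∀ i j : ℕ, 1 ≤ i → i ≤ n → 1 ≤ j → j ≤ n →
      cornerSum w i j ≤ cornerSum A i j) :
    ∀ k, k ≤ n → (Uset w k ⊆ Finset.Icc 1 n) ∧ ((Uset w k).card = n - k) ∧ INV A w k := by
  intro k
  induction k with
  | zero =>
      intro _
      refine ⟨by unfold Uset; exact fun x hx => hx, by unfold Uset; simp, ?_⟩
      intro m j j' hm1 hm2 hj hj'
      show cornerSum w m j + rOf (Uset w 0) j' ≤ cornerSum A m j' + rOf (Uset w 0) j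
      unfold Uset
      rw [rOf_Icc_zero hj', rOf_Icc_zero (le_trans hj hj')]
      have h1 := f_col_mono hw m hj
      have h2 := f_le_g hA h hm2 hj'
      omega
  | succ k IH =>
      intro hk1
      obtain ⟨hsub, hcard, hINV⟩ := IH (by omega)
      obtain ⟨cU, hL, hmax⟩ := pickc_spec hw (by omega : k < n) hcard
      set c := pickc w k (Uset w k) with hc
      have hcIcc := Finset.mem_Icc.mp (hsub cU)
      have hUsucc : Uset w (k+1) = (Uset w k).erase c := rfl
      refine ⟨?_, ?_, ?_⟩
      · rw [hUsucc]; exact fun x hx => hsub (Finset.mem_of_mem_erase hx)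
      · rw [hUsucc, Finset.card_erase_of_mem cU, hcard]; omega
      intro m j j' hm1 hm2 hj hj'
      rw [hUsucc, rOf_erase cU hcIcc.1 j, rOf_erase cU hcIcc.1 j']
      have hIN := hINV m j j' (by omega) hm2 hj hj'
      by_cases hcj : c ≤ j
      · rw [if_pos hcj, if_pos (le_trans hcj hj)]; omega
      by_cases hcj' : c ≤ j'
      swap
      · rw [if_neg hcj, if_neg hcj']; omega
      rw [if_neg hcj, if_pos hcj']
      -- core case : j < c ≤ j'
      by_contra hcon
      push_neg at hcon
      have tight : cornerSum w m j + rOf (Uset w k) j' =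
          cornerSum A m j' + rOf (Uset w k) j := by omega
      have hLj := hL j (by omega)
      have hmd := f_monodiff hw (show k+1 ≤ m by omega) hj
      have hfg' := f_le_g hA h hm2 hj'
      have hstar : cornerSum w (k+1) j' ≤ rOf (Uset w k) j' := by omega
      by_cases hD : ∃ d, c ≤ d ∧ d ≤ j' ∧ rOf (Uset w k) d < cornerSum w (k+1) d
      · obtain ⟨d, hd1, hd2, hd3⟩ := hD
        have hmd2 := f_monodiff hw (show k+1 ≤ m by omega) (show j ≤ d by omega)
        have hI2 := hINV m d j' (by omega) hm2 hd2 hj'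
        omega
      · push_neg at hD
        have hND : ∀ t, t ≤ j' → cornerSum w (k+1) t ≤ rOf (Uset w k) t := by
          intro t ht
          by_cases h' : t < c
          · exact hL t h'
          · exact hD t (by omega) ht
        by_cases hU2 : ∃ u ∈ Uset w k, j' < u
        · set T := (Uset w k).filter (fun u => j' < u) with hT
          have hTne : T.Nonempty := by
            obtain ⟨u, hu1, hu2⟩ := hU2
            exact ⟨u, Finset.mem_filter.mpr ⟨hu1, hu2⟩⟩
          set u1 := T.min' hTne with hu1def
          have hu1T := Finset.min'_mem T hTne
          rw [Finset.mem_filter] at hu1T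
          obtain ⟨u1U, hju1⟩ := hu1T
          have hnotL : ¬(∀ t, t < u1 → cornerSum w (k+1) t ≤ rOf (Uset w k) t) := by
            intro hLu1
            have := hmax u1 u1U hLu1
            omega
          push_neg at hnotL
          obtain ⟨t, ht1, ht2⟩ := hnotL
          have htj' : j' < t := by
            by_contra hc2
            exact absurd (hND t (by omega)) (by omega)
          have hint : ∀ x ∈ Uset w k, ¬(j' < x ∧ x ≤ t) := by
            intro x hx ⟨hx1, hx2⟩
            have : u1 ≤ x := Finset.min'_le T x (Finset.mem_filter.mpr ⟨hx, hx1⟩)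
            omega
          have hri := rOf_interval (Uset w k) (le_of_lt htj') hint
          have hfl := f_col_lip hw (k+1) (le_of_lt htj')
          omega
        · push_neg at hU2
          have hUsubj' : Uset w k ⊆ Finset.Icc 1 j' := by
            intro x hx
            have := Finset.mem_Icc.mp (hsub hx)
            exact Finset.mem_Icc.mpr ⟨this.1, hU2 x hx⟩
          have hrj' := rOf_of_subset hUsubj'
          have hgl := g_lower hA hm2 hj'
          have hfr := f_row_lip hw j (show k+1 ≤ m by omega)
          rw [hcard] at hrj'
          omega

end Spec
lemma Uset_anti {n : ℕ} (w : Matrix (Fin n) (Fin n) ℤ) :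
    ∀ {k k' : ℕ}, k ≤ k' → Uset w k' ⊆ Uset w k := by
  intro k k' hk
  induction k', hk using Nat.le_induction with
  | base => exact fun x hx => hx
  | succ m hm ih =>
      intro x hx
      exact ih (Finset.mem_of_mem_erase hx)

theorem stmt14' {n : ℕ} (A w : Matrix (Fin n) (Fin n) ℤ)
    (hA : IsASM A) (hw : IsPartialPermMatrix w)
    (h : ∀ i j : ℕ, 1 ≤ i → i ≤ n → 1 ≤ j → j ≤ n →
      cornerSum w i j ≤ cornerSum A i j) :
    ∃ w' : Equiv.Perm (Fin n), ∀ i j : ℕ, 1 ≤ i → i ≤ n → 1 ≤ j → j ≤ n →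
      cornerSum w i j ≤ cornerSum (permMatrix w') i j ∧
      cornerSum (permMatrix w') i j ≤ cornerSum A i j := by
  classical
  have hbund := bundle hA hw h
  have hcm : ∀ k, k < n → pickc w k (Uset w k) ∈ Uset w k :=
    fun k hk => (pickc_spec hw hk (hbund k (le_of_lt hk)).2.1).1
  have hcrange : ∀ k, k < n → 1 ≤ pickc w k (Uset w k) ∧ pickc w k (Uset w k) ≤ n :=
    fun k hk => Finset.mem_Icc.mp ((hbund k (le_of_lt hk)).1 (hcm k hk))
  set σ : Fin n → Fin n := fun a =>
    ⟨pickc w (a : ℕ) (Uset w (a : ℕ)) - 1, by have := hcrange a a.2; omega⟩ with hσ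
  have hne : ∀ a b : ℕ, a < b → b < n →
      pickc w b (Uset w b) ≠ pickc w a (Uset w a) := by
    intro a b hab hbn
    have h1 : pickc w b (Uset w b) ∈ Uset w (a+1) :=
      Uset_anti w (by omega) (hcm b hbn)
    exact Finset.ne_of_mem_erase h1
  have hinj : Function.Injective σ := by
    intro a b hab
    have h1 := hcrange a a.2
    have h2 := hcrange b b.2
    have h3 : pickc w (a:ℕ) (Uset w (a:ℕ)) = pickc w (b:ℕ) (Uset w (b:ℕ)) := by
      have := Fin.mk.injEq _ _ _ _ ▸ hab
      simp only [hσ, Fin.mk.injEq] at hab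
      omega
    rcases lt_trichotomy (a:ℕ) (b:ℕ) with hlt | heq | hgt
    · exact absurd h3.symm (hne a b hlt b.2)
    · exact Fin.ext heq
    · exact absurd h3 (hne b a hgt a.2)
  refine ⟨Equiv.ofBijective σ (Finite.injective_iff_bijective.mp hinj), ?_⟩
  have happly : ∀ a : Fin n, (Equiv.ofBijective σ (Finite.injective_iff_bijective.mp hinj)) a = σ a :=
    fun a => rfl
  set w' := Equiv.ofBijective σ (Finite.injective_iff_bijective.mp hinj) with hw'
  -- row partial sums of the permutation matrix
  have hrow : ∀ i j : ℕ, i < n → j ≤ n →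
      rowPartial (permMatrix w') (i+1) j =
        (if pickc w i (Uset w i) ≤ j then 1 else 0) := by
    intro i j hi hj
    have hterm : ∀ l, 1 ≤ l → l ≤ j →
        entry1 (permMatrix w') (i+1) l = (if l = pickc w i (Uset w i) then 1 else 0) := by
      intro l hl1 hl2
      unfold entry1
      rw [dif_pos ⟨by omega, by omega, hl1, by omega⟩]
      show (if w' ⟨i+1-1, by omega⟩ = ⟨l-1, by omega⟩ then (1:ℤ) else 0) = _
      have hv : w' ⟨i+1-1, by omega⟩ = σ ⟨i, by omega⟩ := by
        rw [hw']; rfl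
      rw [hv]
      have hci := hcrange i hi
      by_cases hlc : l = pickc w i (Uset w i)
      · rw [if_pos hlc, if_pos]
        exact Fin.ext (by simp only [hσ]; omega)
      · rw [if_neg hlc, if_neg]
        intro hcon
        have := Fin.mk.injEq .. ▸ hcon
        simp only [hσ, Fin.mk.injEq] at hcon
        omega
    unfold rowPartial
    rw [Finset.sum_congr rfl (fun l hl => by
      have := Finset.mem_Icc.mp hl
      exact hterm l this.1 this.2)]
    rw [Finset.sum_ite_eq' (Finset.Icc 1 j) (pickc w i (Uset w i)) (fun _ => (1:ℤ))]
    have hci := hcrange i hi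
    by_cases hcj : pickc w i (Uset w i) ≤ j
    · rw [if_pos (Finset.mem_Icc.mpr ⟨hci.1, hcj⟩), if_pos hcj]
    · rw [if_neg (fun hc => hcj (Finset.mem_Icc.mp hc).2), if_neg hcj]
  have hcorner : ∀ i, i ≤ n → ∀ j, j ≤ n →
      cornerSum (permMatrix w') i j = rOf (Uset w i) j := by
    intro i
    induction i with
    | zero =>
        intro _ j hj
        rw [cornerSum_zero_row]
        show (0:ℤ) = rOf (Finset.Icc 1 n) j
        rw [rOf_Icc_zero hj]
    | succ i ih =>
        intro hi1 j hj
        rw [cornerSum_succ_row, ih (by omega) j hj, hrow i j (by omega) hj]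
        have hci := hcrange i (by omega)
        rw [show Uset w (i+1) = (Uset w i).erase (pickc w i (Uset w i)) from rfl,
          rOf_erase (hcm i (by omega)) hci.1 j]
  intro i j h1i h2i h1j h2j
  have hINV := (hbund i h2i).2.2
  have hrn : rOf (Uset w i) n = (i : ℤ) := by
    have := rOf_of_subset (hbund i h2i).1
    rw [(hbund i h2i).2.1] at this
    rw [this]
    omega
  have hup := hINV i 0 j (le_refl i) h2i (by omega) h2j
  have hlo := hINV i j n (le_refl i) h2i h2j (le_refl n)
  rw [cornerSum_zero_col, rOf_zero] at hup
  rw [hrn, g_row_full hA h2i] at hlo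
  rw [hcorner i h2i j h2j]
  omega

/-- Let `A ∈ ASM(n)` and let `w` be a partial permutation matrix
with `w ≥ A` (`r_w ≤ r_A` entrywise).  Then there is an honest permutation
`w' ∈ S_n` with `A ≤ w' ≤ w`, i.e. `r_w(i,j) ≤ r_{w'}(i,j) ≤ r_A(i,j)` for
all `1 ≤ i,j ≤ n`. -/
theorem stmt14 {n : ℕ} (A w : Matrix (Fin n) (Fin n) ℤ)
    (hA : IsASM A) (hw : IsPartialPermMatrix w)
    (h : ∀ i j : ℕ, 1 ≤ i → i ≤ n → 1 ≤ j → j ≤ n →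
      cornerSum w i j ≤ cornerSum A i j) :
    ∃ w' : Equiv.Perm (Fin n), ∀ i j : ℕ, 1 ≤ i → i ≤ n → 1 ≤ j → j ≤ n →
      cornerSum w i j ≤ cornerSum (permMatrix w') i j ∧
      cornerSum (permMatrix w') i j ≤ cornerSum A i j := by
  exact stmt14' A w hA hw h
end

section
/- Let k be a field, M an n×n matrix over k, b_1 an invertible lower triangular n×n matrix, and b_2 an invertible upper triangular n×n matrix. Then for all 1 ≤ i,j ≤ n, rank((b_1 M b_2)_{[i],[j]}) = rank(M_{[i],[j]}). In particular, if M = b_1 w b_2 for a partial permutation matrix w, then rank(M_{[i],[j]}) = r_w(i,j) for all i,j. -/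
open scoped Classical

/-- A partial permutation matrix over a field: a 0-1 matrix with at most one
`1` in each row and each column. -/
def IsPartialPermMatrixK {K : Type*} [Field K] {n : ℕ}
    (w : Matrix (Fin n) (Fin n) K) : Prop :=
  (∀ a b : Fin n, w a b = 0 ∨ w a b = 1) ∧
  (∀ a b b' : Fin n, w a b = 1 → w a b' = 1 → b = b') ∧
  (∀ a a' b : Fin n, w a b = 1 → w a' b = 1 → a = a')

/-- The corner sum `r_w(i,j)` of a partial permutation matrix: the number of
`1`s in the first `i` rows and first `j` columns (0-based: rows `< i`,
columns `< j`). -/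
noncomputable def cornerCount {K : Type*} [Field K] {n : ℕ}
    (w : Matrix (Fin n) (Fin n) K) (i j : ℕ) : ℕ :=
  (Finset.univ.filter
    (fun p : Fin n × Fin n =>
      (p.1 : ℕ) < i ∧ (p.2 : ℕ) < j ∧ w p.1 p.2 = 1)).card

lemma sum_castLE_aux {K : Type*} [AddCommMonoid K] {i n : ℕ} (hi : i ≤ n) (f : Fin n → K)
    (h0 : ∀ k : Fin n, i ≤ (k : ℕ) → f k = 0) :
    ∑ k, f k = ∑ k : Fin i, f (Fin.castLE hi k) := by
  classical
  have : ∑ k : Fin i, f (Fin.castLE hi k) = ∑ x ∈ Finset.univ.map (Fin.castLEEmb hi), f x := by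
    rw [Finset.sum_map]; rfl
  rw [this]
  refine (Finset.sum_subset (Finset.subset_univ _) ?_).symm
  intro x _ hx
  apply h0
  by_contra h
  push_neg at h
  exact hx (Finset.mem_map.mpr ⟨⟨x, h⟩, Finset.mem_univ _, rfl⟩)

lemma submatrix_triple_mul_aux {K : Type*} [Field K] {n : ℕ}
    (M b₁ b₂ : Matrix (Fin n) (Fin n) K)
    (hb₁tri : ∀ a b : Fin n, a < b → b₁ a b = 0)
    (hb₂tri : ∀ a b : Fin n, b < a → b₂ a b = 0)
    (i j : ℕ) (hi : i ≤ n) (hj : j ≤ n) :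
    (b₁ * M * b₂).submatrix (Fin.castLE hi) (Fin.castLE hj) =
      b₁.submatrix (Fin.castLE hi) (Fin.castLE hi) *
        (M.submatrix (Fin.castLE hi) (Fin.castLE hj)) *
        b₂.submatrix (Fin.castLE hj) (Fin.castLE hj) := by
  ext a b
  simp only [Matrix.submatrix_apply, Matrix.mul_apply]
  rw [sum_castLE_aux hj (fun l => (∑ k, b₁ (Fin.castLE hi a) k * M k l) * b₂ l (Fin.castLE hj b))]
  · refine Finset.sum_congr rfl fun l _ => ?_
    congr 1
    rw [sum_castLE_aux hi (fun k => b₁ (Fin.castLE hi a) k * M k (Fin.castLE hj l))]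
    intro k hk
    rw [hb₁tri _ _ (by simpa [Fin.lt_def] using lt_of_lt_of_le a.isLt hk), zero_mul]
  · intro l hl
    rw [hb₂tri _ _ (by simpa [Fin.lt_def] using lt_of_lt_of_le b.isLt hl), mul_zero]

lemma rank_ppm_aux {K : Type*} [Field K] {n : ℕ} (w : Matrix (Fin n) (Fin n) K)
    (hw : IsPartialPermMatrixK w) (i j : ℕ) (hi : i ≤ n) (hj : j ≤ n) :
    (w.submatrix (Fin.castLE hi) (Fin.castLE hj)).rank = cornerCount w i j := by
  classical
  set W := w.submatrix (Fin.castLE hi) (Fin.castLE hj) with hW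
  set C : Finset (Fin j) := Finset.univ.filter (fun b => ∃ a : Fin i, W a b = 1) with hC
  -- cornerCount = C.card
  have hcc : cornerCount w i j = C.card := by
    apply Finset.card_bij (fun (p : Fin n × Fin n) hp =>
      (⟨(p.2 : ℕ), (Finset.mem_filter.mp hp).2.2.1⟩ : Fin j))
    · intro p hp
      simp only [hC, Finset.mem_filter, Finset.mem_univ, true_and]
      obtain ⟨-, h1, h2, h3⟩ := Finset.mem_filter.mp hp
      refine ⟨⟨(p.1 : ℕ), h1⟩, ?_⟩
      simpa [hW, Matrix.submatrix_apply, Fin.castLE] using h3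
    · intro p hp q hq hpq
      obtain ⟨-, -, -, h3⟩ := Finset.mem_filter.mp hp
      obtain ⟨-, -, -, h3'⟩ := Finset.mem_filter.mp hq
      have hval : (p.2 : ℕ) = (q.2 : ℕ) := by simpa using congrArg Fin.val hpq
      have h2 : p.2 = q.2 := Fin.ext hval
      have h1 : p.1 = q.1 := hw.2.2 _ _ _ h3 (h2 ▸ h3')
      exact Prod.ext h1 h2
    · intro b hb
      obtain ⟨-, a, ha⟩ := Finset.mem_filter.mp hb
      refine ⟨(Fin.castLE hi a, Fin.castLE hj b), ?_, ?_⟩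
      · simp only [Finset.mem_filter, Finset.mem_univ, true_and]
        exact ⟨a.isLt.trans_le hi |>.trans_le le_rfl |>.trans_le le_rfl |> fun _ => a.isLt,
          b.isLt, ha⟩
      · exact Fin.ext rfl
  rw [hcc]
  -- rank = C.card
  have hex : ∀ b : {x // x ∈ C}, ∃ a : Fin i, W a (b : Fin j) = 1 :=
    fun b => (Finset.mem_filter.mp b.2).2
  choose row hrow using hex
  have hcol : ∀ (b : {x // x ∈ C}) (a : Fin i), W a (b : Fin j) = if a = row b then 1 else 0 := by
    intro b a
    split_ifs with h
    · exact h ▸ hrow b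
    · rcases hw.1 (Fin.castLE hi a) (Fin.castLE hj (b : Fin j)) with h0 | h1
      · exact h0
      · exfalso
        have := hw.2.2 _ _ _ h1 (hrow b)
        have : a = row b := by simpa [Fin.ext_iff] using this
        exact h this
  have hrow_inj : Function.Injective row := by
    intro b b' he
    have := hw.2.1 (Fin.castLE hi (row b)) (Fin.castLE hj (b : Fin j)) (Fin.castLE hj (b' : Fin j))
      (hrow b) (by rw [he]; exact hrow b')
    have h' : ((Fin.castLE hj (b : Fin j) : Fin n) : ℕ) = (Fin.castLE hj (b' : Fin j) : Fin n) :=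
      congrArg Fin.val this
    exact Subtype.ext (Fin.ext h')
  have hv : ∀ b : {x // x ∈ C}, W.transpose (b : Fin j) = Pi.single (row b) (1 : K) := by
    intro b
    funext a
    rw [Matrix.transpose_apply, hcol b a]
    by_cases h : a = row b <;> simp [h, Pi.single_apply]
  have hone : (fun a : Fin i => Pi.single a (1:K)) = ⇑(Pi.basisFun K (Fin i)) := by
    funext a; simp
  have hli : LinearIndependent K (fun b : {x // x ∈ C} => W.transpose (b : Fin j)) := by
    have heq : (fun b : {x // x ∈ C} => W.transpose (b : Fin j)) =
        (fun a : Fin i => Pi.single a (1:K)) ∘ row := by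
      funext b; rw [hv b]; rfl
    rw [heq, hone]
    exact (Pi.basisFun K (Fin i)).linearIndependent.comp row hrow_inj
  have hspan : Submodule.span K (Set.range W.transpose) =
      Submodule.span K (Set.range (fun b : {x // x ∈ C} => W.transpose (b : Fin j))) := by
    apply le_antisymm
    · rw [Submodule.span_le]
      rintro x ⟨b, rfl⟩
      by_cases hb : b ∈ C
      · exact Submodule.subset_span ⟨⟨b, hb⟩, rfl⟩
      · have hz : W.transpose b = 0 := by
          funext a
          simp only [hC, Finset.mem_filter, Finset.mem_univ, true_and, not_exists] at hb
          rcases hw.1 (Fin.castLE hi a) (Fin.castLE hj b) with h0 | h1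
          · exact h0
          · exact absurd h1 (hb a)
        rw [hz]; exact Submodule.zero_mem _
    · exact Submodule.span_mono (by rintro x ⟨b, rfl⟩; exact ⟨(b : Fin j), rfl⟩)
  rw [Matrix.rank_eq_finrank_span_cols]
  change Module.finrank K ↥(Submodule.span K (Set.range W.transpose)) = C.card
  rw [hspan, finrank_span_eq_card hli, Fintype.card_coe]

/-- Multiplication on the left by an invertible lower triangular
matrix and on the right by an invertible upper triangular matrix preserves the
ranks of all northwest submatrices; in particular if `M = b₁ w b₂` for a
partial permutation matrix `w`, then `rank M_{[i],[j]} = r_w(i,j)`. -/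
theorem stmt15 {K : Type*} [Field K] {n : ℕ}
    (M b₁ b₂ : Matrix (Fin n) (Fin n) K)
    (hb₁ : IsUnit b₁) (hb₁tri : ∀ a b : Fin n, a < b → b₁ a b = 0)
    (hb₂ : IsUnit b₂) (hb₂tri : ∀ a b : Fin n, b < a → b₂ a b = 0) :
    (∀ (i j : ℕ) (hi : i ≤ n) (hj : j ≤ n),
      ((b₁ * M * b₂).submatrix (Fin.castLE hi) (Fin.castLE hj)).rank =
        (M.submatrix (Fin.castLE hi) (Fin.castLE hj)).rank) ∧
    (∀ w : Matrix (Fin n) (Fin n) K, IsPartialPermMatrixK w →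
      M = b₁ * w * b₂ →
      ∀ (i j : ℕ) (hi : i ≤ n) (hj : j ≤ n),
        (M.submatrix (Fin.castLE hi) (Fin.castLE hj)).rank =
          cornerCount w i j) := by
  classical
  -- diagonal entries of b₁ and b₂ are nonzero
  have hdet₁ : b₁.det = ∏ k, b₁ k k :=
    Matrix.det_of_lowerTriangular b₁ (fun a b h => hb₁tri a b (by simpa using h))
  have hdet₂ : b₂.det = ∏ k, b₂ k k :=
    Matrix.det_of_upperTriangular (fun a b h => hb₂tri a b (by simpa using h))
  have hdiag₁ : ∀ k : Fin n, b₁ k k ≠ 0 := by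
    have := (Matrix.isUnit_iff_isUnit_det b₁).mp hb₁
    rw [hdet₁, isUnit_iff_ne_zero] at this
    exact fun k => Finset.prod_ne_zero_iff.mp this k (Finset.mem_univ k)
  have hdiag₂ : ∀ k : Fin n, b₂ k k ≠ 0 := by
    have := (Matrix.isUnit_iff_isUnit_det b₂).mp hb₂
    rw [hdet₂, isUnit_iff_ne_zero] at this
    exact fun k => Finset.prod_ne_zero_iff.mp this k (Finset.mem_univ k)
  -- part 1, stated for an arbitrary matrix
  have key : ∀ (N : Matrix (Fin n) (Fin n) K) (i j : ℕ) (hi : i ≤ n) (hj : j ≤ n),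
      ((b₁ * N * b₂).submatrix (Fin.castLE hi) (Fin.castLE hj)).rank =
        (N.submatrix (Fin.castLE hi) (Fin.castLE hj)).rank := by
    intro N i j hi hj
    set L := b₁.submatrix (Fin.castLE hi) (Fin.castLE hi) with hL
    set U := b₂.submatrix (Fin.castLE hj) (Fin.castLE hj) with hU
    have hLdet : IsUnit L.det := by
      have htri : ∀ a b : Fin i, a < b → L a b = 0 := fun a b h =>
        hb₁tri _ _ h
      have : L.det = ∏ k, L k k :=
        Matrix.det_of_lowerTriangular L (fun a b h => htri a b (OrderDual.toDual_lt_toDual.mp h))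
      rw [this, isUnit_iff_ne_zero]
      exact Finset.prod_ne_zero_iff.mpr fun k _ => hdiag₁ _
    have hUdet : IsUnit U.det := by
      have htri : ∀ a b : Fin j, b < a → U a b = 0 := fun a b h =>
        hb₂tri _ _ h
      have : U.det = ∏ k, U k k :=
        Matrix.det_of_upperTriangular (fun a b h => htri a b h)
      rw [this, isUnit_iff_ne_zero]
      exact Finset.prod_ne_zero_iff.mpr fun k _ => hdiag₂ _
    rw [submatrix_triple_mul_aux N b₁ b₂ hb₁tri hb₂tri i j hi hj,
      Matrix.rank_mul_eq_left_of_isUnit_det U _ hUdet,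
      Matrix.rank_mul_eq_right_of_isUnit_det L _ hLdet]
  refine ⟨key M, ?_⟩
  intro w hw hM i j hi hj
  rw [hM, key w i j hi hj, rank_ppm_aux w hw i j hi hj]
end

section
/- Let k be an algebraically closed field and A ∈ ASM(n). Then X_A is the union of the matrix Schubert varieties of permutations above A: an n×n matrix M over k satisfies rank(M_{[i],[j]}) ≤ r_A(i,j) for all 1 ≤ i,j ≤ n if and only if there exists a permutation w ∈ S_n with r_w(i,j) ≤ r_A(i,j) for all i,j (i.e. w ≥ A) and rank(M_{[i],[j]}) ≤ r_w(i,j) for all i,j (i.e. M ∈ X_w). -/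
section Stmt16AuxSec
open Finset Submodule Module
set_option linter.unusedSectionVars false
namespace Stmt16Aux

variable {K : Type*} [Field K] {n : ℕ}

/-- truncation of a vector to its first `j` coordinates (1-based count). -/
def trunc (j : ℕ) (x : Fin n → K) : Fin n → K := fun l => if (l : ℕ) < j then x l else 0

/-- truncation as a linear map. -/
def truncL (j : ℕ) : (Fin n → K) →ₗ[K] (Fin n → K) where
  toFun := trunc j
  map_add' x y := by funext l; by_cases h : (l : ℕ) < j <;> simp [trunc, h]
  map_smul' c x := by funext l; by_cases h : (l : ℕ) < j <;> simp [trunc, h]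

lemma trunc_trunc {t j : ℕ} (h : t ≤ j) (x : Fin n → K) :
    trunc t (trunc j x) = trunc t x := by
  funext l
  by_cases h1 : (l : ℕ) < t
  · simp [trunc, h1, lt_of_lt_of_le h1 h]
  · simp [trunc, h1]

variable (M : Matrix (Fin n) (Fin n) K)

/-- the set of first-`i` rows truncated to first `j` columns. -/
def rset (i j : ℕ) : Set (Fin n → K) := (fun k => trunc j (M k)) '' {k : Fin n | (k : ℕ) < i}

noncomputable def rho (i j : ℕ) : ℕ := finrank K (span K (rset M i j))

lemma rho_zero (j : ℕ) : rho M 0 j = 0 := by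
  have h : rset M 0 j = ∅ := by ext x; simp [rset]
  simp [rho, h]

lemma rho_col_zero (i : ℕ) : rho M i 0 = 0 := by
  have h : span K (rset M i 0) ≤ ⊥ := by
    rw [span_le]
    rintro x ⟨k, -, rfl⟩
    have : trunc 0 (M k) = (0 : Fin n → K) := by funext l; simp [trunc]
    simp [this]
  simp only [rho]
  rw [le_bot_iff.mp h]
  simp

lemma rset_mono_left {i i' j : ℕ} (h : i ≤ i') : rset M i j ⊆ rset M i' j := by
  rintro x ⟨k, hk, rfl⟩; exact ⟨k, lt_of_lt_of_le hk h, rfl⟩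

lemma rho_mono_left {i i' j : ℕ} (h : i ≤ i') : rho M i j ≤ rho M i' j :=
  Submodule.finrank_mono (span_mono (rset_mono_left M h))

lemma rset_succ {i j : ℕ} (h : i < n) :
    rset M (i + 1) j = insert (trunc j (M ⟨i, h⟩)) (rset M i j) := by
  ext x
  constructor
  · rintro ⟨k, hk, rfl⟩
    simp only [Set.mem_setOf_eq] at hk
    rcases Nat.lt_or_ge (k : ℕ) i with h1 | h1
    · exact Or.inr ⟨k, h1, rfl⟩
    · have hki : k = ⟨i, h⟩ := by apply Fin.ext; simp; omega
      rw [hki]; exact Or.inl rfl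
  · rintro (rfl | ⟨k, hk, rfl⟩)
    · exact ⟨⟨i, h⟩, by simp, rfl⟩
    · exact ⟨k, Nat.lt_succ_of_lt hk, rfl⟩

lemma rset_stable {i j : ℕ} (h : n ≤ i) : rset M (i+1) j = rset M i j := by
  ext x; constructor
  · rintro ⟨k, hk, rfl⟩; exact ⟨k, lt_of_lt_of_le k.isLt h, rfl⟩
  · rintro ⟨k, hk, rfl⟩; exact ⟨k, lt_of_lt_of_le k.isLt (le_trans h (Nat.le_succ i)), rfl⟩

lemma rho_succ_le {i j : ℕ} : rho M (i+1) j ≤ rho M i j + 1 := by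
  rcases Nat.lt_or_ge i n with h | h
  · simp only [rho]
    rw [rset_succ M h, Submodule.span_insert]
    refine le_trans (Nat.le_add_right _ (finrank K
      ↥(span K {trunc j (M ⟨i, h⟩)} ⊓ span K (rset M i j)))) ?_
    rw [Submodule.finrank_sup_add_finrank_inf_eq]
    have h2 : finrank K (span K {trunc j (M ⟨i, h⟩)}) ≤ 1 := by
      rcases eq_or_ne (trunc j (M ⟨i, h⟩)) 0 with hx | hx
      · have hb : span K {trunc j (M ⟨i, h⟩)} = ⊥ := by
          rw [hx]; exact Submodule.span_zero_singleton K
        rw [hb, finrank_bot]; omega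
      · rw [finrank_span_singleton hx]
    omega
  · simp only [rho]
    rw [rset_stable M h]
    exact Nat.le_succ _

/-- one-step supermodularity -/
lemma rho_supermod_step {i t j : ℕ} (htj : t ≤ j) :
    rho M (i+1) t + rho M i j ≤ rho M i t + rho M (i+1) j := by
  rcases Nat.lt_or_ge i n with h | h
  · by_cases hx : trunc t (M ⟨i, h⟩) ∈ span K (rset M i t)
    · have he : rho M (i+1) t = rho M i t := by
        simp only [rho]
        rw [rset_succ M h, Submodule.span_insert_eq_span hx]
      rw [he]
      exact Nat.add_le_add (le_refl _) (rho_mono_left M (Nat.le_succ i))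
    · have hxj' : trunc j (M ⟨i, h⟩) ∉ span K (rset M i j) := by
        intro hmem
        apply hx
        have h2 : (truncL (K := K) (n := n) t) '' (rset M i j) = rset M i t := by
          have hc : (⇑(truncL (K := K) (n := n) t) ∘ fun k : Fin n => trunc j (M k))
              = fun k : Fin n => trunc t (M k) := by
            funext k
            exact trunc_trunc htj (M k)
          rw [rset, rset, ← Set.image_comp, hc]
        have h3 : trunc t (M ⟨i, h⟩) ∈
            Submodule.map (truncL (K := K) (n := n) t) (span K (rset M i j)) :=
          ⟨trunc j (M ⟨i, h⟩), hmem, trunc_trunc htj (M ⟨i, h⟩)⟩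
        rwa [Submodule.map_span, h2] at h3
      have hlt : span K (rset M i j) < span K (rset M (i+1) j) := by
        refine lt_of_le_of_ne (span_mono (rset_mono_left M (Nat.le_succ i))) ?_
        intro heq
        apply hxj'
        rw [heq]
        exact subset_span (by rw [rset_succ M h]; exact Or.inl rfl)
      have h4 : rho M i j < rho M (i+1) j := Submodule.finrank_lt_finrank_of_lt hlt
      have h5 : rho M (i+1) t ≤ rho M i t + 1 := rho_succ_le M
      omega
  · simp only [rho]
    rw [rset_stable M h, rset_stable M h]

lemma rho_supermod {i k t j : ℕ} (hik : i ≤ k) (htj : t ≤ j) :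
    rho M i j + rho M k t ≤ rho M i t + rho M k j := by
  induction k, hik using Nat.le_induction with
  | base => omega
  | succ k hk ih =>
    have := rho_supermod_step M (i := k) htj
    omega

lemma rho_row_step {i j : ℕ} : rho M i j ≤ rho M (i+1) j ∧ rho M (i+1) j ≤ rho M i j + 1 :=
  ⟨rho_mono_left M (Nat.le_succ i), rho_succ_le M⟩



/-- extension-by-zero of a `j`-vector to an `n`-vector (as a linear map). -/
def extL (j : ℕ) : (Fin j → K) →ₗ[K] (Fin n → K) where
  toFun x := fun l => if h : (l : ℕ) < j then x ⟨l, h⟩ else 0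
  map_add' x y := by funext l; by_cases h : (l : ℕ) < j <;> simp [h]
  map_smul' c x := by funext l; by_cases h : (l : ℕ) < j <;> simp [h]

lemma extL_injective {j : ℕ} (hj : j ≤ n) : Function.Injective (extL (K := K) (n := n) j) := by
  intro x y hxy
  funext b
  have hb : ((Fin.castLE hj b : Fin n) : ℕ) < j := b.isLt
  have := congrFun hxy (Fin.castLE hj b)
  simpa [extL, hb] using this

lemma rank_submatrix_eq_rho {i j : ℕ} (hi : i ≤ n) (hj : j ≤ n) :
    (M.submatrix (Fin.castLE hi) (Fin.castLE hj)).rank = rho M i j := by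
  set N := M.submatrix (Fin.castLE hi) (Fin.castLE hj) with hN
  rw [Matrix.rank_eq_finrank_span_row]
  have himg : (extL (K := K) (n := n) j) '' (Set.range N) = rset M i j := by
    ext x
    constructor
    · rintro ⟨-, ⟨a, rfl⟩, rfl⟩
      refine ⟨Fin.castLE hi a, a.isLt, ?_⟩
      funext l
      by_cases h : (l : ℕ) < j
      · have hl : Fin.castLE hj ⟨(l : ℕ), h⟩ = l := by apply Fin.ext; simp
        show (if h' : (l : ℕ) < j then N a ⟨(l : ℕ), h'⟩ else 0) = trunc j (M (Fin.castLE hi a)) l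
        rw [dif_pos h]
        show M (Fin.castLE hi a) (Fin.castLE hj ⟨(l : ℕ), h⟩) = trunc j (M (Fin.castLE hi a)) l
        rw [hl]
        simp [trunc, h]
      · simp [extL, trunc, h]
    · rintro ⟨k, hk, rfl⟩
      refine ⟨N ⟨(k : ℕ), hk⟩, ⟨⟨(k : ℕ), hk⟩, rfl⟩, ?_⟩
      have hck : Fin.castLE hi ⟨(k : ℕ), hk⟩ = k := by apply Fin.ext; simp
      funext l
      by_cases h : (l : ℕ) < j
      · have hl : Fin.castLE hj ⟨(l : ℕ), h⟩ = l := by apply Fin.ext; simp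
        show (if h' : (l : ℕ) < j then N ⟨(k : ℕ), hk⟩ ⟨(l : ℕ), h'⟩ else 0) = trunc j (M k) l
        rw [dif_pos h]
        show M (Fin.castLE hi ⟨(k : ℕ), hk⟩) (Fin.castLE hj ⟨(l : ℕ), h⟩) = trunc j (M k) l
        rw [hl, hck]
        simp [trunc, h]
      · simp [extL, trunc, h]
  have := (Submodule.equivMapOfInjective _ (extL_injective (K := K) hj)
      (span K (Set.range N))).finrank_eq
  rw [show Set.range N.row = Set.range N from rfl, this, Submodule.map_span, himg]
  rfl

end Stmt16Aux
namespace Core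

variable (n : ℕ) (F R : ℕ → ℕ → ℤ)

/-- count of previously chosen values that are `≤ j`. -/
def Gp (prev : List ℕ) (j : ℕ) : ℤ := (((prev.toFinset).filter (fun v => v ≤ j)).card : ℤ)

/-- the set of columns where row `m+1` of `F` steps up. -/
def pset (m : ℕ) : Finset ℕ := (Finset.Icc 1 n).filter (fun j => F m j < F (m+1) j)

/-- position of the step of row `m+1` (or `n` if none). -/
def pP (m : ℕ) : ℕ := if h : (pset n F m).Nonempty then (pset n F m).min' h else n

open Classical in
/-- tight columns before choosing the value of row `m+1`. -/
noncomputable def tset (m : ℕ) (prev : List ℕ) : Finset ℕ :=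
  (Finset.Icc 1 n).filter
    (fun j => ∃ k ∈ Finset.Icc (m+1) n, F (m+1) j + (R k j - F k j) ≤ Gp prev j)

noncomputable def tT (m : ℕ) (prev : List ℕ) : ℕ :=
  if h : (tset n F R m prev).Nonempty then (tset n F R m prev).max' h else 0

noncomputable def cand (m : ℕ) (prev : List ℕ) : Finset ℕ :=
  (Finset.Ioc (tT n F R m prev) (pP n F m)).filter (fun v => ¬ v ∈ prev)

noncomputable def pick (m : ℕ) (prev : List ℕ) : ℕ :=
  if h : (cand n F R m prev).Nonempty then (cand n F R m prev).max' h else 0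

noncomputable def wl : ℕ → List ℕ
  | 0 => []
  | (m+1) => wl m ++ [pick n F R m (wl m)]

noncomputable def wv (k : ℕ) : ℕ := pick n F R (k-1) (wl n F R (k-1))

noncomputable def Gf (i j : ℕ) : ℤ := Gp (wl n F R i) j

variable {n F R}
variable (hn : 1 ≤ n)
  (hF00 : ∀ j, F 0 j = 0)
  (hF0 : ∀ i, F i 0 = 0)
  (hFrow : ∀ i j, F i j ≤ F (i+1) j ∧ F (i+1) j ≤ F i j + 1)
  (hFsup : ∀ i k t j, i ≤ k → t ≤ j → F i j + F k t ≤ F i t + F k j)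
  (hFR : ∀ k j, 1 ≤ k → k ≤ n → 1 ≤ j → j ≤ n → F k j ≤ R k j)
  (hR0 : ∀ k, R k 0 = 0)
  (hRcol : ∀ k t j, t ≤ j → j ≤ n → 1 ≤ k → k ≤ n → R k j - R k t ≤ (j : ℤ) - (t : ℤ))
  (hRn : ∀ k, 1 ≤ k → k ≤ n → R k n = (k : ℤ))

section Flemmas
include hFrow

lemma FmonoRow : ∀ i k j : ℕ, i ≤ k → F i j ≤ F k j := by
  intro i k j hik
  induction k, hik using Nat.le_induction with
  | base => exact le_refl _
  | succ k hk ih => exact le_trans ih (hFrow k j).1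

lemma FrowLinear : ∀ i k j : ℕ, i ≤ k → F k j ≤ F i j + ((k : ℤ) - (i : ℤ)) := by
  intro i k j hik
  induction k, hik using Nat.le_induction with
  | base => simp
  | succ k hk ih =>
    have := (hFrow k j).2
    have hc : ((k+1 : ℕ) : ℤ) = (k : ℤ) + 1 := by push_cast; ring
    rw [hc]; omega

include hF00 hFsup
lemma FmonoCol : ∀ i t j : ℕ, t ≤ j → F i t ≤ F i j := by
  intro i t j htj
  have := hFsup 0 i t j (Nat.zero_le i) htj
  rw [hF00 j, hF00 t] at this
  omega

end Flemmas

/-- `Gp` facts -/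
lemma Gp_mono (prev : List ℕ) {t j : ℕ} (h : t ≤ j) : Gp prev t ≤ Gp prev j := by
  unfold Gp
  have hss : prev.toFinset.filter (fun v => v ≤ t) ⊆ prev.toFinset.filter (fun v => v ≤ j) := by
    intro v hv
    rcases Finset.mem_filter.mp hv with ⟨h1, h2⟩
    exact Finset.mem_filter.mpr ⟨h1, le_trans h2 h⟩
  exact_mod_cast Finset.card_le_card hss

lemma Gp_zero (prev : List ℕ) (hmem : ∀ v ∈ prev, 1 ≤ v) : Gp prev 0 = 0 := by
  unfold Gp
  have : prev.toFinset.filter (fun v => v ≤ 0) = ∅ := by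
    rw [Finset.filter_eq_empty_iff]
    intro v hv
    have := hmem v (List.mem_toFinset.mp hv)
    omega
  rw [this]; simp

lemma Gp_top (prev : List ℕ) (hnd : prev.Nodup) (hmem : ∀ v ∈ prev, v ≤ n) :
    Gp prev n = prev.length := by
  unfold Gp
  have h1 : prev.toFinset.filter (fun v => v ≤ n) = prev.toFinset := by
    rw [Finset.filter_eq_self]
    intro v hv
    exact hmem v (List.mem_toFinset.mp hv)
  rw [h1, List.toFinset_card_of_nodup hnd]

lemma Gp_append (prev : List ℕ) (x : ℕ) (hx : ¬ x ∈ prev) (j : ℕ) :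
    Gp (prev ++ [x]) j = Gp prev j + (if x ≤ j then 1 else 0) := by
  unfold Gp
  rw [List.toFinset_append, List.toFinset_cons, List.toFinset_nil, LawfulSingleton.insert_empty_eq]
  rw [Finset.union_comm, ← Finset.insert_eq, Finset.filter_insert]
  split
  · rw [Finset.card_insert_of_notMem (fun hmem => hx
      (List.mem_toFinset.mp (Finset.mem_of_mem_filter _ hmem)))]
    push_cast; ring
  · simp

/-- counting: if all values in `(t, p]` occur in `prev`, the count jumps by `p - t`. -/
lemma Gp_gap (prev : List ℕ) {t p : ℕ} (htp : t ≤ p)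
    (hall : ∀ v, t < v → v ≤ p → v ∈ prev) :
    Gp prev t + ((p : ℤ) - (t : ℤ)) ≤ Gp prev p := by
  unfold Gp
  have hsub : (prev.toFinset.filter (fun v => v ≤ t)) ∪ Finset.Ioc t p ⊆
      prev.toFinset.filter (fun v => v ≤ p) := by
    intro v hv
    rcases Finset.mem_union.mp hv with hv1 | hv2
    · rcases Finset.mem_filter.mp hv1 with ⟨h1, h2⟩
      exact Finset.mem_filter.mpr ⟨h1, le_trans h2 htp⟩
    · rcases Finset.mem_Ioc.mp hv2 with ⟨h1, h2⟩
      exact Finset.mem_filter.mpr ⟨List.mem_toFinset.mpr (hall v h1 h2), h2⟩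
  have hdis : Disjoint (prev.toFinset.filter (fun v => v ≤ t)) (Finset.Ioc t p) := by
    rw [Finset.disjoint_left]
    intro v hv1 hv2
    rcases Finset.mem_filter.mp hv1 with ⟨-, h2⟩
    rcases Finset.mem_Ioc.mp hv2 with ⟨h3, -⟩
    omega
  have := Finset.card_le_card hsub
  rw [Finset.card_union_of_disjoint hdis, Nat.card_Ioc] at this
  have hcast : ((p - t : ℕ) : ℤ) = (p : ℤ) - (t : ℤ) := by
    have : t ≤ p := htp
    push_cast [this]
    ring
  omega



lemma pP_bounds (hn : 1 ≤ n) (m : ℕ) : 1 ≤ pP n F m ∧ pP n F m ≤ n := by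
  unfold pP
  split
  · next h =>
      rcases Finset.mem_Icc.mp (Finset.mem_of_mem_filter _ (Finset.min'_mem _ h)) with ⟨h1, h2⟩
      exact ⟨h1, h2⟩
  · exact ⟨hn, le_refl n⟩

include hF0 hFrow in
lemma F_step_lt {m j : ℕ} (hj : j ≤ n) (hlt : j < pP n F m) : F (m+1) j = F m j := by
  rcases Nat.eq_zero_or_pos j with rfl | hj1
  · rw [hF0, hF0]
  · have hmem : j ∉ pset n F m := by
      intro hmem
      unfold pP at hlt
      rw [dif_pos ⟨j, hmem⟩] at hlt
      exact absurd (Finset.min'_le _ j hmem) (by omega)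
    have h2 : ¬ (F m j < F (m+1) j) := fun hc =>
      hmem (Finset.mem_filter.mpr ⟨Finset.mem_Icc.mpr ⟨hj1, hj⟩, hc⟩)
    have := (hFrow m j).1
    omega

include hFrow hFsup in
lemma F_step_ge {m : ℕ} (hne : (pset n F m).Nonempty) {j : ℕ} (hpj : pP n F m ≤ j) :
    F (m+1) j = F m j + 1 := by
  have hpmem : pP n F m ∈ pset n F m := by
    unfold pP
    rw [dif_pos hne]
    exact Finset.min'_mem _ hne
  have h1 : F m (pP n F m) < F (m+1) (pP n F m) := (Finset.mem_filter.mp hpmem).2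
  have h2 : F (m+1) (pP n F m) ≤ F m (pP n F m) + 1 := (hFrow m (pP n F m)).2
  have h4 := hFsup m (m+1) (pP n F m) j (Nat.le_succ m) hpj
  have h5 := (hFrow m j).2
  omega

include hF0 hFrow in
lemma F_step_none {m : ℕ} (hne : ¬ (pset n F m).Nonempty) {j : ℕ} (hj : j ≤ n) :
    F (m+1) j = F m j := by
  rcases Nat.eq_zero_or_pos j with rfl | hj1
  · rw [hF0, hF0]
  · have hmem : j ∉ pset n F m := fun hmem => hne ⟨j, hmem⟩
    have h2 : ¬ (F m j < F (m+1) j) := fun hc =>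
      hmem (Finset.mem_filter.mpr ⟨Finset.mem_Icc.mpr ⟨hj1, hj⟩, hc⟩)
    have := (hFrow m j).1
    omega

lemma mem_tset_iff {m j : ℕ} {prev : List ℕ} :
    j ∈ tset n F R m prev ↔ (j ∈ Finset.Icc 1 n ∧
      ∃ k ∈ Finset.Icc (m+1) n, F (m+1) j + (R k j - F k j) ≤ Gp prev j) := by
  simp only [tset, Finset.mem_filter]

lemma tight_le_tT {m j : ℕ} (prev : List ℕ) (hj1 : 1 ≤ j) (hjn : j ≤ n)
    (h : ∃ k ∈ Finset.Icc (m+1) n, F (m+1) j + (R k j - F k j) ≤ Gp prev j) :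
    j ≤ tT n F R m prev := by
  have hmem : j ∈ tset n F R m prev :=
    mem_tset_iff.mpr ⟨Finset.mem_Icc.mpr ⟨hj1, hjn⟩, h⟩
  unfold tT
  rw [dif_pos ⟨j, hmem⟩]
  exact Finset.le_max' _ j hmem

lemma tT_tight {m : ℕ} (prev : List ℕ) (h1 : 1 ≤ tT n F R m prev) :
    tT n F R m prev ∈ tset n F R m prev := by
  unfold tT at *
  by_cases hne : (tset n F R m prev).Nonempty
  · rw [dif_pos hne]
    exact Finset.max'_mem _ hne
  · rw [dif_neg hne] at h1
    omega

/-- the invariant carried through the construction. -/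
def Inv (n : ℕ) (F R : ℕ → ℕ → ℤ) (i : ℕ) : Prop :=
  (wl n F R i).length = i ∧ (wl n F R i).Nodup ∧
  (∀ v ∈ wl n F R i, 1 ≤ v ∧ v ≤ n) ∧
  (∀ j k : ℕ, 1 ≤ j → j ≤ n → i ≤ k → 1 ≤ k → k ≤ n →
    Gf n F R i j ≤ F i j + (R k j - F k j)) ∧
  (∀ j : ℕ, j ≤ n → F i j ≤ Gf n F R i j)



include hn hF00 hF0 hFrow hFsup hFR hR0 hRcol hRn in
lemma inv_all : ∀ i, i ≤ n → Inv n F R i := by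
  intro i
  induction i with
  | zero =>
    intro _
    refine ⟨rfl, List.nodup_nil, by simp [wl], ?_, ?_⟩
    · intro j k hj1 hjn hik hk1 hkn
      have h2 : F k j ≤ R k j := hFR k j hk1 hkn hj1 hjn
      have h3 : Gf n F R 0 j = 0 := by simp [Gf, wl, Gp]
      rw [h3, hF00 j]
      omega
    · intro j hj
      have h3 : Gf n F R 0 j = 0 := by simp [Gf, wl, Gp]
      rw [h3, hF00 j]
  | succ m ih =>
    intro hin
    obtain ⟨hlen, hnd, hmem, hI1, hI2⟩ := ih (le_trans (Nat.le_succ m) hin)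
    simp only [Gf] at hI1 hI2
    have hm1n : m + 1 ≤ n := hin
    obtain ⟨hp1, hpn⟩ := pP_bounds (F := F) hn m
    -- Step 1 : no tight column at or beyond p
    have hnotight : ∀ j k : ℕ, pP n F m ≤ j → j ≤ n → m+1 ≤ k → k ≤ n →
        Gp (wl n F R m) j < F (m+1) j + (R k j - F k j) := by
      intro j k hpj hjn hk1 hkn
      by_cases hne : (pset n F m).Nonempty
      · have hFj : F (m+1) j = F m j + 1 :=
          F_step_ge (hFrow := hFrow) (hFsup := hFsup) hne hpj
        have := hI1 j k (le_trans hp1 hpj) hjn (by omega) (by omega) hkn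
        omega
      · have hpeq : pP n F m = n := by unfold pP; rw [dif_neg hne]
        have hjeq : j = n := by omega
        have hGm : Gp (wl n F R m) n = ((wl n F R m).length : ℤ) :=
          Gp_top _ hnd (fun v hv => (hmem v hv).2)
        rw [hlen] at hGm
        have hRk : R k n = (k : ℤ) := hRn k (by omega) hkn
        have hFk : F k n ≤ F (m+1) n + ((k : ℤ) - ((m+1 : ℕ) : ℤ)) :=
          FrowLinear (hFrow := hFrow) (m+1) k n hk1
        rw [hjeq, hGm, hRk]
        push_cast at hFk ⊢
        omega
    -- Step 2 : t < p
    have htlt : tT n F R m (wl n F R m) < pP n F m := by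
      by_contra hcon
      push_neg at hcon
      have ht1 : 1 ≤ tT n F R m (wl n F R m) := le_trans hp1 hcon
      have htmem := tT_tight (prev := wl n F R m) ht1
      rcases mem_tset_iff.mp htmem with ⟨htIcc, k0, hk0, htight⟩
      rcases Finset.mem_Icc.mp htIcc with ⟨ht1', htn⟩
      rcases Finset.mem_Icc.mp hk0 with ⟨hk01, hk0n⟩
      exact absurd htight (not_le.mpr (hnotight _ k0 hcon htn hk01 hk0n))
    -- Step 3 : the candidate set is nonempty
    have hcand : (cand n F R m (wl n F R m)).Nonempty := by
      by_contra hemp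
      rw [Finset.not_nonempty_iff_eq_empty] at hemp
      have hall : ∀ v, tT n F R m (wl n F R m) < v → v ≤ pP n F m → v ∈ wl n F R m := by
        intro v hv1 hv2
        by_contra hvmem
        have hvc : v ∈ cand n F R m (wl n F R m) := by
          unfold cand
          exact Finset.mem_filter.mpr ⟨Finset.mem_Ioc.mpr ⟨hv1, hv2⟩, hvmem⟩
        rw [hemp] at hvc
        exact absurd hvc (Finset.notMem_empty v)
      have hgap := Gp_gap (wl n F R m) (le_of_lt htlt) hall
      by_cases ht0 : tT n F R m (wl n F R m) = 0
      · rw [ht0] at hgap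
        have hG0 : Gp (wl n F R m) 0 = 0 := Gp_zero _ (fun v hv => (hmem v hv).1)
        rw [hG0] at hgap
        by_cases hne : (pset n F m).Nonempty
        · have hFp : F (m+1) (pP n F m) = F m (pP n F m) + 1 :=
            F_step_ge (hFrow := hFrow) (hFsup := hFsup) hne (le_refl _)
          have h1 := hI1 (pP n F m) (m+1) hp1 hpn (Nat.le_succ m) (by omega) hm1n
          have h2 := hRcol (m+1) 0 (pP n F m) (Nat.zero_le _) hpn (by omega) hm1n
          have h3 := hR0 (m+1)
          push_cast at hgap h2 ⊢
          omega
        · have hpeq : pP n F m = n := by unfold pP; rw [dif_neg hne]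
          have hGm : Gp (wl n F R m) n = ((wl n F R m).length : ℤ) :=
            Gp_top _ hnd (fun v hv => (hmem v hv).2)
          rw [hlen] at hGm
          rw [hpeq, hGm] at hgap
          push_cast at hgap
          omega
      · have ht1 : 1 ≤ tT n F R m (wl n F R m) := by omega
        have htmem := tT_tight (prev := wl n F R m) ht1
        rcases mem_tset_iff.mp htmem with ⟨htIcc, k0, hk0, htight⟩
        rcases Finset.mem_Icc.mp htIcc with ⟨ht1', htn⟩
        rcases Finset.mem_Icc.mp hk0 with ⟨hk01, hk0n⟩
        have hch1 := hFsup (m+1) k0 (tT n F R m (wl n F R m)) (pP n F m) hk01 (le_of_lt htlt)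
        have hch2 := hRcol k0 (tT n F R m (wl n F R m)) (pP n F m) (le_of_lt htlt) hpn
          (by omega) hk0n
        have hfinal := hnotight (pP n F m) k0 (le_refl _) hpn hk01 hk0n
        omega
    -- Step 4 : the chosen value
    have hpick : pick n F R m (wl n F R m) ∈ cand n F R m (wl n F R m) := by
      unfold pick
      rw [dif_pos hcand]
      exact Finset.max'_mem _ hcand
    rcases Finset.mem_filter.mp hpick with ⟨hpIoc, hpnotmem⟩
    rcases Finset.mem_Ioc.mp hpIoc with ⟨hxt, hxp⟩
    have hx1 : 1 ≤ pick n F R m (wl n F R m) := by omega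
    have hxn : pick n F R m (wl n F R m) ≤ n := le_trans hxp hpn
    have hwl : wl n F R (m+1) = wl n F R m ++ [pick n F R m (wl n F R m)] := rfl
    have hGstep : ∀ j, Gf n F R (m+1) j =
        Gp (wl n F R m) j + (if pick n F R m (wl n F R m) ≤ j then 1 else 0) := by
      intro j
      exact Gp_append _ _ hpnotmem j
    refine ⟨?_, ?_, ?_, ?_, ?_⟩
    · rw [hwl, List.length_append, hlen]
      simp
    · rw [hwl, List.nodup_append]
      refine ⟨hnd, List.nodup_singleton _, ?_⟩
      intro a ha b hb hax
      rw [List.mem_singleton] at hb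
      subst hb hax
      exact hpnotmem ha
    · intro v hv
      rw [hwl] at hv
      rcases List.mem_append.mp hv with h | h
      · exact hmem v h
      · rw [List.mem_singleton] at h
        subst h
        exact ⟨hx1, hxn⟩
    · intro j k hj1 hjn hik hk1 hkn
      have hkm : m ≤ k := by omega
      by_cases hxj : pick n F R m (wl n F R m) ≤ j
      · rw [hGstep j, if_pos hxj]
        by_cases hstep : F m j < F (m+1) j
        · have h2 := (hFrow m j).2
          have := hI1 j k hj1 hjn hkm hk1 hkn
          omega
        · have hmono := (hFrow m j).1
          have hnt : ¬ (F (m+1) j + (R k j - F k j) ≤ Gp (wl n F R m) j) := by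
            intro hcon
            have hle := tight_le_tT (prev := wl n F R m) hj1 hjn
              ⟨k, Finset.mem_Icc.mpr ⟨hik, hkn⟩, hcon⟩
            omega
          omega
      · rw [hGstep j, if_neg hxj]
        have h1 := hI1 j k hj1 hjn hkm hk1 hkn
        have h2 := FmonoRow (hFrow := hFrow) m (m+1) j (Nat.le_succ m)
        omega
    · intro j hjn
      by_cases hxj : pick n F R m (wl n F R m) ≤ j
      · rw [hGstep j, if_pos hxj]
        have h1 := hI2 j hjn
        have h2 := (hFrow m j).2
        omega
      · rw [hGstep j, if_neg hxj]
        have hFeq : F (m+1) j = F m j :=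
          F_step_lt (hF0 := hF0) (hFrow := hFrow) hjn (by omega)
        rw [hFeq]
        have := hI2 j hjn
        omega



include hn hF00 hF0 hFrow hFsup hFR hR0 hRcol hRn in
lemma Gf_sum : ∀ i, i ≤ n → ∀ j,
    Gf n F R i j = ∑ k ∈ Finset.Icc 1 i, (if wv n F R k ≤ j then (1:ℤ) else 0) := by
  intro i
  induction i with
  | zero => intro _ j; simp [Gf, wl, Gp]
  | succ m ih =>
    intro hin j
    obtain ⟨-, hnd, -, -, -⟩ :=
      inv_all (hn := hn) (hF00 := hF00) (hF0 := hF0) (hFrow := hFrow) (hFsup := hFsup)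
        (hFR := hFR) (hR0 := hR0) (hRcol := hRcol) (hRn := hRn) (m+1) hin
    have hx : ¬ pick n F R m (wl n F R m) ∈ wl n F R m := by
      rw [show wl n F R (m+1) = wl n F R m ++ [pick n F R m (wl n F R m)] from rfl,
        List.nodup_append] at hnd
      intro hmem'
      exact hnd.2.2 _ hmem' _ (List.mem_singleton_self _) rfl
    have hstep : Gf n F R (m+1) j =
        Gp (wl n F R m) j + (if pick n F R m (wl n F R m) ≤ j then 1 else 0) :=
      Gp_append _ _ hx j
    have hwv : wv n F R (m+1) = pick n F R m (wl n F R m) := rfl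
    rw [hstep, show Gp (wl n F R m) j = Gf n F R m j from rfl, ih (by omega) j,
      Finset.sum_Icc_succ_top (by omega : 1 ≤ m+1), hwv]

lemma wv_mem {k : ℕ} (hk1 : 1 ≤ k) : wv n F R k ∈ wl n F R k := by
  obtain ⟨k0, rfl⟩ : ∃ k0, k = k0 + 1 := ⟨k-1, by omega⟩
  show pick n F R k0 (wl n F R k0) ∈ wl n F R (k0+1)
  rw [show wl n F R (k0+1) = wl n F R k0 ++ [pick n F R k0 (wl n F R k0)] from rfl]
  exact List.mem_append_right _ (List.mem_singleton_self _)

lemma wl_mono_mem {i i' v : ℕ} (h : i ≤ i') (hv : v ∈ wl n F R i) : v ∈ wl n F R i' := by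
  induction i', h using Nat.le_induction with
  | base => exact hv
  | succ i' h ih =>
    rw [show wl n F R (i'+1) = wl n F R i' ++ [pick n F R i' (wl n F R i')] from rfl]
    exact List.mem_append_left _ ih

include hn hF00 hF0 hFrow hFsup hFR hR0 hRcol hRn in
theorem core_exists :
    ∃ w : ℕ → ℕ,
      (∀ k, 1 ≤ k → k ≤ n → 1 ≤ w k ∧ w k ≤ n) ∧
      (∀ k k', 1 ≤ k → k ≤ n → 1 ≤ k' → k' ≤ n → w k = w k' → k = k') ∧
      (∀ i j, 1 ≤ i → i ≤ n → 1 ≤ j → j ≤ n →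
        F i j ≤ (∑ k ∈ Finset.Icc 1 i, if w k ≤ j then (1:ℤ) else 0) ∧
        (∑ k ∈ Finset.Icc 1 i, if w k ≤ j then (1:ℤ) else 0) ≤ R i j) := by
  have hinv := inv_all (hn := hn) (hF00 := hF00) (hF0 := hF0) (hFrow := hFrow)
    (hFsup := hFsup) (hFR := hFR) (hR0 := hR0) (hRcol := hRcol) (hRn := hRn)
  have hGs := Gf_sum (hn := hn) (hF00 := hF00) (hF0 := hF0) (hFrow := hFrow)
    (hFsup := hFsup) (hFR := hFR) (hR0 := hR0) (hRcol := hRcol) (hRn := hRn)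
  refine ⟨wv n F R, ?_, ?_, ?_⟩
  · intro k hk1 hkn
    obtain ⟨-, -, hmem, -, -⟩ := hinv k hkn
    exact hmem _ (wv_mem hk1)
  · intro k k' hk1 hkn hk'1 hk'n heq
    by_contra hne
    rcases Nat.lt_or_ge k k' with hlt | hge
    · obtain ⟨k0, rfl⟩ : ∃ k0, k' = k0 + 1 := ⟨k'-1, by omega⟩
      obtain ⟨-, hnd, -, -, -⟩ := hinv (k0+1) hk'n
      rw [show wl n F R (k0+1) = wl n F R k0 ++ [pick n F R k0 (wl n F R k0)] from rfl,
        List.nodup_append] at hnd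
      have hmem1 : wv n F R k ∈ wl n F R k0 := wl_mono_mem (by omega) (wv_mem hk1)
      have : wv n F R (k0+1) = pick n F R k0 (wl n F R k0) := rfl
      rw [← heq] at this
      exact hnd.2.2 _ hmem1 (wv n F R k) (by rw [← this]; exact List.mem_singleton_self _) rfl
    · have hlt : k' < k := by omega
      obtain ⟨k0, rfl⟩ : ∃ k0, k = k0 + 1 := ⟨k-1, by omega⟩
      obtain ⟨-, hnd, -, -, -⟩ := hinv (k0+1) hkn
      rw [show wl n F R (k0+1) = wl n F R k0 ++ [pick n F R k0 (wl n F R k0)] from rfl,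
        List.nodup_append] at hnd
      have hmem1 : wv n F R k' ∈ wl n F R k0 := wl_mono_mem (by omega) (wv_mem hk'1)
      have : wv n F R (k0+1) = pick n F R k0 (wl n F R k0) := rfl
      rw [heq] at this
      exact hnd.2.2 _ hmem1 (wv n F R k') (by rw [← this]; exact List.mem_singleton_self _) rfl
  · intro i j hi1 hin hj1 hjn
    obtain ⟨-, -, -, hI1, hI2⟩ := hinv i hin
    constructor
    · rw [← hGs i hin j]
      exact hI2 j hjn
    · rw [← hGs i hin j]
      have := hI1 j i hj1 hjn (le_refl i) hi1 hin
      omega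

end Core
end Stmt16AuxSec

namespace Stmt16Aux

lemma cornerSum_row {n : ℕ} (A : Matrix (Fin n) (Fin n) ℤ) (i j : ℕ) :
    cornerSum A i j = ∑ k ∈ Finset.Icc 1 i, rowPartial A k j := rfl

lemma cornerSum_col {n : ℕ} (A : Matrix (Fin n) (Fin n) ℤ) (i j : ℕ) :
    cornerSum A i j = ∑ l ∈ Finset.Icc 1 j, colPartial A i l := by
  unfold cornerSum colPartial
  exact Finset.sum_comm

lemma cornerSum_col_zero {n : ℕ} (A : Matrix (Fin n) (Fin n) ℤ) (k : ℕ) :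
    cornerSum A k 0 = 0 := by
  simp [cornerSum]

lemma cornerSum_full_row {n : ℕ} (A : Matrix (Fin n) (Fin n) ℤ) (hA : IsASM A)
    {k : ℕ} (hk1 : 1 ≤ k) (hkn : k ≤ n) : cornerSum A k n = (k : ℤ) := by
  rw [cornerSum_row]
  have hc : ∀ x ∈ Finset.Icc 1 k, rowPartial A x n = 1 := by
    intro x hx
    rcases Finset.mem_Icc.mp hx with ⟨h1, h2⟩
    exact hA.2.2.1 x h1 (le_trans h2 hkn)
  rw [Finset.sum_congr rfl hc, Finset.sum_const, Nat.card_Icc]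
  simp

lemma cornerSum_col_diff {n : ℕ} (A : Matrix (Fin n) (Fin n) ℤ) (hA : IsASM A)
    {k t j : ℕ} (htj : t ≤ j) (hjn : j ≤ n) :
    cornerSum A k j - cornerSum A k t ≤ (j : ℤ) - (t : ℤ) := by
  rw [cornerSum_col, cornerSum_col]
  have hsub : Finset.Icc 1 t ⊆ Finset.Icc 1 j := by
    intro v hv
    rcases Finset.mem_Icc.mp hv with ⟨h1, h2⟩
    exact Finset.mem_Icc.mpr ⟨h1, le_trans h2 htj⟩
  have hsd : Finset.Icc 1 j \ Finset.Icc 1 t = Finset.Ioc t j := by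
    ext v
    simp only [Finset.mem_sdiff, Finset.mem_Icc, Finset.mem_Ioc, not_and, not_le]
    omega
  have hdiff := Finset.sum_sdiff_eq_sub (f := fun l => colPartial A k l) hsub
  rw [hsd] at hdiff
  rw [← hdiff]
  have hbd : ∀ l ∈ Finset.Ioc t j, colPartial A k l ≤ 1 := by
    intro l hl
    rcases hA.2.1 k l with h | h <;> omega
  calc (∑ l ∈ Finset.Ioc t j, colPartial A k l) ≤ (Finset.Ioc t j).card • (1 : ℤ) :=
        Finset.sum_le_card_nsmul _ _ _ hbd
    _ = ((j - t : ℕ) : ℤ) := by rw [Nat.card_Ioc]; simp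
    _ ≤ (j : ℤ) - (t : ℤ) := by push_cast; omega

end Stmt16Aux

open Stmt16Aux Core in
/-- For an algebraically closed field `K` and `A ∈ ASM(n)`, the
ASM variety `X_A` is the union of the matrix Schubert varieties `X_w` over
permutations `w ≥ A`: a matrix `M` satisfies `rank M_{[i],[j]} ≤ r_A(i,j)` for
all `1 ≤ i,j ≤ n` iff there is `w ∈ S_n` with `r_w ≤ r_A` entrywise (`w ≥ A`)
and `rank M_{[i],[j]} ≤ r_w(i,j)` for all `i,j` (`M ∈ X_w`). -/
theorem stmt16 {K : Type*} [Field K] [IsAlgClosed K] {n : ℕ}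
    (A : Matrix (Fin n) (Fin n) ℤ) (hA : IsASM A)
    (M : Matrix (Fin n) (Fin n) K) :
    (∀ (i j : ℕ) (hi : i ≤ n) (hj : j ≤ n), 1 ≤ i → 1 ≤ j →
      ((M.submatrix (Fin.castLE hi) (Fin.castLE hj)).rank : ℤ) ≤
        cornerSum A i j) ↔
    (∃ w : Equiv.Perm (Fin n),
      (∀ i j : ℕ, 1 ≤ i → i ≤ n → 1 ≤ j → j ≤ n →
        cornerSum (permMatrix w) i j ≤ cornerSum A i j) ∧
      (∀ (i j : ℕ) (hi : i ≤ n) (hj : j ≤ n), 1 ≤ i → 1 ≤ j →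
        ((M.submatrix (Fin.castLE hi) (Fin.castLE hj)).rank : ℤ) ≤
          cornerSum (permMatrix w) i j)) := by
  constructor
  · intro h
    rcases Nat.eq_zero_or_pos n with hn0 | hn
    · subst hn0
      refine ⟨Equiv.refl _, ?_, ?_⟩
      · intro i j hi1 hin hj1 hjn
        omega
      · intro i j hi hj hi1 hj1
        omega
    · -- the main case
      set F : ℕ → ℕ → ℤ := fun i j => ((rho M i j : ℕ) : ℤ) with hF
      have hF00 : ∀ j, F 0 j = 0 := by intro j; simp [hF, rho_zero]
      have hF0 : ∀ i, F i 0 = 0 := by intro i; simp [hF, rho_col_zero]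
      have hFrow : ∀ i j, F i j ≤ F (i+1) j ∧ F (i+1) j ≤ F i j + 1 := by
        intro i j
        have h1 := rho_mono_left M (i := i) (i' := i+1) (j := j) (Nat.le_succ i)
        have h2 := rho_succ_le M (i := i) (j := j)
        constructor <;> simp [hF] <;> exact_mod_cast ‹_›
      have hFsup : ∀ i k t j, i ≤ k → t ≤ j → F i j + F k t ≤ F i t + F k j := by
        intro i k t j hik htj
        have := rho_supermod M hik htj (i := i) (k := k) (t := t) (j := j)
        simp only [hF]
        push_cast
        omega
      have hFR : ∀ k j, 1 ≤ k → k ≤ n → 1 ≤ j → j ≤ n → F k j ≤ cornerSum A k j := by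
        intro k j hk1 hkn hj1 hjn
        have hh := h k j hkn hjn hk1 hj1
        rwa [rank_submatrix_eq_rho M hkn hjn] at hh
      have hR0 : ∀ k, cornerSum A k 0 = 0 := fun k => cornerSum_col_zero A k
      have hRcol : ∀ k t j, t ≤ j → j ≤ n → 1 ≤ k → k ≤ n →
          cornerSum A k j - cornerSum A k t ≤ (j : ℤ) - (t : ℤ) := by
        intro k t j htj hjn _ _
        exact cornerSum_col_diff A hA htj hjn
      have hRn : ∀ k, 1 ≤ k → k ≤ n → cornerSum A k n = (k : ℤ) := by
        intro k hk1 hkn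
        exact cornerSum_full_row A hA hk1 hkn
      obtain ⟨w, hw1, hw2, hw3⟩ := core_exists (n := n) (F := F) (R := cornerSum A)
        (hn := hn) (hF00 := hF00) (hF0 := hF0) (hFrow := hFrow) (hFsup := hFsup)
        (hFR := hFR) (hR0 := hR0) (hRcol := hRcol) (hRn := hRn)
      -- build the permutation
      have hb : ∀ a : Fin n, w ((a : ℕ) + 1) - 1 < n := by
        intro a
        have := hw1 ((a : ℕ) + 1) (by omega) (by omega)
        omega
      have hinj : Function.Injective (fun a : Fin n => (⟨w ((a : ℕ) + 1) - 1, hb a⟩ : Fin n)) := by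
        intro a b hab
        have h1 := hw1 ((a : ℕ) + 1) (by omega) (by omega)
        have h2 := hw1 ((b : ℕ) + 1) (by omega) (by omega)
        have h3 : w ((a : ℕ) + 1) - 1 = w ((b : ℕ) + 1) - 1 := congrArg Fin.val hab
        have h4 : w ((a : ℕ) + 1) = w ((b : ℕ) + 1) := by omega
        have h5 := hw2 _ _ (by omega) (by omega) (by omega) (by omega) h4
        exact Fin.ext (by omega)
      set wperm : Equiv.Perm (Fin n) :=
        Equiv.ofBijective _ (Finite.injective_iff_bijective.mp hinj) with hwperm
      have hwa : ∀ a : Fin n, (wperm a : ℕ) = w ((a : ℕ) + 1) - 1 := fun a => rfl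
      -- the corner sums of the permutation matrix
      have hpc : ∀ i j, 1 ≤ i → i ≤ n → 1 ≤ j → j ≤ n →
          cornerSum (permMatrix wperm) i j =
            ∑ k ∈ Finset.Icc 1 i, (if w k ≤ j then (1:ℤ) else 0) := by
        intro i j hi1 hin hj1 hjn
        rw [cornerSum_row]
        apply Finset.sum_congr rfl
        intro k hk
        rcases Finset.mem_Icc.mp hk with ⟨hk1, hki⟩
        have hkn : k ≤ n := le_trans hki hin
        have hwk1 := hw1 k hk1 hkn
        have hkf : k - 1 < n := by omega
        have hwkv : (wperm ⟨k - 1, hkf⟩ : ℕ) = w k - 1 := by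
          rw [hwa ⟨k - 1, hkf⟩]
          have hv : ((⟨k - 1, hkf⟩ : Fin n) : ℕ) = k - 1 := rfl
          rw [hv, show k - 1 + 1 = k from by omega]
        have hterm : ∀ l ∈ Finset.Icc 1 j, entry1 (permMatrix wperm) k l =
            (if l = w k then (1:ℤ) else 0) := by
          intro l hl
          rcases Finset.mem_Icc.mp hl with ⟨hl1, hlj⟩
          have hln : l ≤ n := le_trans hlj hjn
          unfold entry1
          rw [dif_pos ⟨hk1, hkn, hl1, hln⟩]
          show (if wperm ⟨k - 1, hkf⟩ = ⟨l - 1, by omega⟩ then (1:ℤ) else 0) = _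
          have hlf : l - 1 < n := by omega
          by_cases hlw : l = w k
          · rw [if_pos hlw, if_pos]
            apply Fin.ext
            rw [hwkv]
            show w k - 1 = l - 1
            omega
          · rw [if_neg hlw, if_neg]
            intro hcon
            have hval := congrArg Fin.val hcon
            rw [hwkv] at hval
            have hv2 : ((⟨l - 1, hlf⟩ : Fin n) : ℕ) = l - 1 := rfl
            rw [hv2] at hval
            omega
        unfold rowPartial
        rw [Finset.sum_congr rfl hterm, Finset.sum_ite_eq' (Finset.Icc 1 j) (w k)
          (fun _ => (1:ℤ))]
        simp only [Finset.mem_Icc]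
        by_cases hwkj : w k ≤ j
        · rw [if_pos ⟨hwk1.1, hwkj⟩, if_pos hwkj]
        · rw [if_neg (fun hc => hwkj hc.2), if_neg hwkj]
      refine ⟨wperm, ?_, ?_⟩
      · intro i j hi1 hin hj1 hjn
        rw [hpc i j hi1 hin hj1 hjn]
        exact (hw3 i j hi1 hin hj1 hjn).2
      · intro i j hi hj hi1 hj1
        rw [hpc i j hi1 hi hj1 hj, rank_submatrix_eq_rho M hi hj]
        exact (hw3 i j hi1 hi hj1 hj).1
  · rintro ⟨w, hw1, hw2⟩ i j hi hj hi1 hj1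
    exact le_trans (hw2 i j hi hj hi1 hj1) (hw1 i j hi1 hi hj1 hj)
end
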